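/- arXiv:1905.00165 — 10 statements merged into one kernel-verified Lean document; each statement's English description precedes it below -/
import Mathlib

section
/- Let K be an n×n complex matrix and p a determinantal point process with marginal kernel K. Let a : Fin n be an index with K a a ≠ 1 and B a finset of Fin n with a ∉ B. Then the sum of p(S) over all finsets S with B ⊆ S and a ∉ S equals (1 − K a a) · det(K_B − (K a a − 1)⁻¹ · K_{B,{a}} · K_{{a},B}). -/
open Matrix

/-- The submatrix of `K` with rows indexed by `A` and columns indexed by `B`. -/
def kSub {n : ℕ} (K : Matrix (Fin n) (Fin n) ℂ) (A B : Finset (Fin n)) :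
    Matrix A B ℂ :=
  Matrix.of fun i j => K i j

/-- `p` is a determinantal point process with marginal kernel `K`:
`p` is a probability mass function on finsets of `Fin n` and for every finset `Y`
the probability that `Y` is contained in the sample equals `det (K_Y)`. -/
def IsDPP {n : ℕ} (K : Matrix (Fin n) (Fin n) ℂ) (p : Finset (Fin n) → ℝ) : Prop :=
  (∀ S, 0 ≤ p S) ∧ (∑ S : Finset (Fin n), p S = 1) ∧
    ∀ Y : Finset (Fin n),
      ((∑ S ∈ Finset.univ.filter fun S => Y ⊆ S, p S : ℝ) : ℂ) =
        (kSub K Y Y).det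

theorem stmt_5 {n : ℕ} (K : Matrix (Fin n) (Fin n) ℂ) (p : Finset (Fin n) → ℝ)
    (hp : IsDPP K p) (a : Fin n) (ha : K a a ≠ 1) (B : Finset (Fin n))
    (haB : a ∉ B) :
    ((∑ S ∈ Finset.univ.filter fun S => B ⊆ S ∧ a ∉ S, p S : ℝ) : ℂ) =
      (1 - K a a) *
        (kSub K B B - (K a a - 1)⁻¹ • (kSub K B {a} * kSub K {a} B)).det := by
  obtain ⟨hp0, hp1, hpm⟩ := hp
  have hKa1 : K a a - 1 ≠ 0 := sub_ne_zero.mpr ha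
  -- Step 1: split the sum
  set B' : Finset (Fin n) := insert a B with hB'
  have hsplit : (∑ S ∈ Finset.univ.filter fun S => B ⊆ S ∧ a ∉ S, p S)
      = (∑ S ∈ Finset.univ.filter fun S => B ⊆ S, p S)
        - (∑ S ∈ Finset.univ.filter fun S => B' ⊆ S, p S) := by
    have h1 : (Finset.univ.filter fun S : Finset (Fin n) => B ⊆ S ∧ a ∉ S)
        = (Finset.univ.filter fun S => B ⊆ S).filter fun S => a ∉ S := by
      rw [Finset.filter_filter]
    have h2 : (Finset.univ.filter fun S : Finset (Fin n) => B' ⊆ S)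
        = (Finset.univ.filter fun S => B ⊆ S).filter fun S => ¬ a ∉ S := by
      rw [Finset.filter_filter]
      apply Finset.filter_congr
      intro S _
      simp [hB', Finset.insert_subset_iff, and_comm]
    have := Finset.sum_filter_add_sum_filter_not
      (Finset.univ.filter fun S : Finset (Fin n) => B ⊆ S) (fun S => a ∉ S) p
    rw [h1, h2]
    linarith [this]
  rw [hsplit]
  rw [Complex.ofReal_sub, hpm B, hpm B']
  -- Step 2: the matrix identity
  -- setup
  have ha' : a ∈ ({a} : Finset (Fin n)) := Finset.mem_singleton_self a
  set i0 : ({a} : Finset (Fin n)) := ⟨a, ha'⟩ with hi0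
  haveI : Unique (({a} : Finset (Fin n)) : Type) :=
    ⟨⟨i0⟩, fun x => Subtype.ext (Finset.mem_singleton.mp x.2)⟩
  set A := kSub K B B
  set C := kSub K B ({a} : Finset (Fin n))
  set R := kSub K ({a} : Finset (Fin n)) B
  set d := kSub K ({a} : Finset (Fin n)) ({a} : Finset (Fin n))
  set d' : Matrix ({a} : Finset (Fin n)) ({a} : Finset (Fin n)) ℂ := d - 1 with hd'
  have hd'eq : d' = (K a a - 1) • (1 : Matrix ({a} : Finset (Fin n)) ({a} : Finset (Fin n)) ℂ) := by
    ext i j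
    have hi : i = i0 := Subsingleton.elim _ _
    have hj : j = i0 := Subsingleton.elim _ _
    subst hi; subst hj
    simp [hd', d, kSub, Matrix.one_apply]
    rfl
  -- invertibility of d'
  haveI hinv : Invertible d' := by
    refine ⟨(K a a - 1)⁻¹ • (1 : Matrix ({a} : Finset (Fin n)) ({a} : Finset (Fin n)) ℂ), ?_, ?_⟩
    · rw [hd'eq, Matrix.smul_mul, Matrix.mul_smul, smul_smul, one_mul,
        inv_mul_cancel₀ hKa1, one_smul]
    · rw [hd'eq, Matrix.smul_mul, Matrix.mul_smul, smul_smul, one_mul,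
        mul_inv_cancel₀ hKa1, one_smul]
  have hinvOf : (⅟d' : Matrix ({a} : Finset (Fin n)) ({a} : Finset (Fin n)) ℂ)
      = (K a a - 1)⁻¹ • 1 := by
    refine invOf_eq_right_inv ?_
    rw [hd'eq, Matrix.smul_mul, Matrix.mul_smul, smul_smul, one_mul,
      mul_inv_cancel₀ hKa1, one_smul]
  -- equiv between B ⊕ {a} and B'
  have haB' : a ∈ B' := Finset.mem_insert_self a B
  set e : (B : Type) ⊕ (({a} : Finset (Fin n)) : Type) ≃ (B' : Type) :=
    { toFun := fun x => Sum.elim (fun i => ⟨i.1, Finset.mem_insert_of_mem i.2⟩)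
        (fun _ => ⟨a, haB'⟩) x
      invFun := fun x => if h : (x : Fin n) ∈ B then Sum.inl ⟨x, h⟩ else Sum.inr i0
      left_inv := by
        rintro (i | j)
        · simp
        · simp only [Sum.elim_inr]
          refine (dif_neg haB).trans ?_
          congr 1
          exact (Subsingleton.elim _ _)
      right_inv := by
        intro x
        by_cases h : (x : Fin n) ∈ B
        · simp [h]
        · have hx : (x : Fin n) = a := by
            rcases Finset.mem_insert.mp x.2 with h' | h'
            · exact h'
            · exact absurd h' h
          dsimp only
          rw [dif_neg h]
          exact Subtype.ext hx.symm } with he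
  -- the key: det (kSub K B' B') = det (fromBlocks A C R d)
  have key : ∀ u v, K ((e u : (B' : Type)) : Fin n) ((e v : (B' : Type)) : Fin n)
      = fromBlocks A C R d u v := by
    rintro (i | j) (i' | j')
    · rfl
    · have hj' : (j' : Fin n) = a := Finset.mem_singleton.mp j'.2
      show K (i : Fin n) a = K (i : Fin n) (j' : Fin n)
      rw [hj']
    · have hj : (j : Fin n) = a := Finset.mem_singleton.mp j.2
      show K a (i' : Fin n) = K (j : Fin n) (i' : Fin n)
      rw [hj]
    · have hj : (j : Fin n) = a := Finset.mem_singleton.mp j.2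
      have hj' : (j' : Fin n) = a := Finset.mem_singleton.mp j'.2
      show K a a = K (j : Fin n) (j' : Fin n)
      rw [hj, hj']
  have hsub : kSub K B' B' = (fromBlocks A C R d).submatrix e.symm e.symm := by
    ext x y
    show K (x : Fin n) (y : Fin n) = fromBlocks A C R d (e.symm x) (e.symm y)
    rw [← key (e.symm x) (e.symm y), Equiv.apply_symm_apply, Equiv.apply_symm_apply]
  have hdetB' : (kSub K B' B').det = (fromBlocks A C R d).det := by
    rw [hsub]
    exact Matrix.det_submatrix_equiv_self e.symm _
  -- decompose by multilinearity in the bottom row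
  have hrow : (fromBlocks A C R d)
      = (fromBlocks A C R d').updateRow (Sum.inr i0)
          (Sum.elim (fun i => R i0 i) (fun j => d' i0 j)
            + Sum.elim (fun _ => 0) (fun j => (1 : Matrix _ _ ℂ) i0 j)) := by
    ext x y
    rcases x with i | j
    · rw [Matrix.updateRow_ne (by simp)]
      rcases y with i' | j' <;> rfl
    · have hj : j = i0 := Subsingleton.elim _ _
      subst hj
      rw [Matrix.updateRow_self]
      rcases y with i' | j' <;> simp [fromBlocks, hd']
  have hstep1 : (fromBlocks A C R d').updateRow (Sum.inr i0)
        (Sum.elim (fun i => R i0 i) (fun j => d' i0 j)) = fromBlocks A C R d' := by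
    ext x y
    rcases x with i | j
    · rw [Matrix.updateRow_ne (by simp)]
    · have hj : j = i0 := Subsingleton.elim _ _
      subst hj
      rw [Matrix.updateRow_self]
      rcases y with i' | j' <;> rfl
  have hstep2 : (fromBlocks A C R d').updateRow (Sum.inr i0)
        (Sum.elim (fun _ => 0) (fun j => (1 : Matrix _ _ ℂ) i0 j))
      = fromBlocks A C 0 1 := by
    ext x y
    rcases x with i | j
    · rw [Matrix.updateRow_ne (by simp)]
      rcases y with i' | j' <;> rfl
    · have hj : j = i0 := Subsingleton.elim _ _
      subst hj
      rw [Matrix.updateRow_self]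
      rcases y with i' | j' <;> rfl
  have hdetM : (fromBlocks A C R d).det
      = (fromBlocks A C R d').det + A.det := by
    rw [hrow, Matrix.det_updateRow_add, hstep1, hstep2,
      Matrix.det_fromBlocks_zero₂₁, Matrix.det_one, mul_one]
  -- Schur
  have hschur : (fromBlocks A C R d').det
      = (K a a - 1) * (A - (K a a - 1)⁻¹ • (C * R)).det := by
    rw [Matrix.det_fromBlocks₂₂, hinvOf]
    congr 1
    · rw [Matrix.det_unique]
      have hdd : ∀ i j : (({a} : Finset (Fin n)) : Type), d' i j = K a a - 1 := by
        intro i j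
        have hij : i = j := Subsingleton.elim _ _
        subst hij
        rw [hd'eq]
        simp [Matrix.one_apply]
      exact hdd _ _
    · congr 1
      rw [Matrix.mul_smul, Matrix.mul_one, Matrix.smul_mul]
  rw [hdetB', hdetM, hschur]
  ring
end

section
/- Let K be an n×n complex matrix and p a determinantal point process with marginal kernel K. Let A and B be disjoint finsets of Fin n such that the matrix K_A − I (I the identity matrix of size |A|) is invertible. Then the sum of p(S) over all finsets S with B ⊆ S and A ∩ S = ∅ equals (−1)^{|A|} · det(K_A − I) · det(K_B − K_{B,A} · (K_A − I)⁻¹ · K_{A,B}). -/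
open Matrix

namespace Stmt6Aux

variable {n : ℕ}

/-- The matrix equal to `K` on `Y × Y`, identity elsewhere, minus the diagonal indicator
of `C`. -/
def MY (K : Matrix (Fin n) (Fin n) ℂ) (Y C : Finset (Fin n)) : Matrix (Fin n) (Fin n) ℂ :=
  Matrix.of fun i j =>
    (if i ∈ Y ∧ j ∈ Y then K i j else if i = j then 1 else 0) -
      (if i ∈ C ∧ i = j then 1 else 0)

lemma det_MY_empty (K : Matrix (Fin n) (Fin n) ℂ) (Y : Finset (Fin n)) :
    (MY K Y ∅).det = (kSub K Y Y).det := by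
  rw [Matrix.twoBlockTriangular_det (MY K Y ∅) (fun i => i ∈ Y)
    (by
      intro i hi j hj
      have hij : i ≠ j := by rintro rfl; exact hi hj
      simp [MY, hi, hij])]
  have h1 : (Matrix.toSquareBlockProp (MY K Y ∅) (fun i => i ∈ Y)) = kSub K Y Y := by
    ext i j
    simp [Matrix.toSquareBlockProp, Matrix.toBlock, MY, kSub, i.2, j.2]
  have h2 : (Matrix.toSquareBlockProp (MY K Y ∅) (fun i => ¬ i ∈ Y)) = 1 := by
    ext i j
    simp [Matrix.toSquareBlockProp, Matrix.toBlock, MY, Matrix.one_apply, i.2,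
      Subtype.ext_iff]
  rw [h1, h2, Matrix.det_one, mul_one]
  congr!

lemma det_update (K : Matrix (Fin n) (Fin n) ℂ) (Y C : Finset (Fin n)) (a : Fin n)
    (haC : a ∉ C) :
    ((MY K Y C).updateRow a (Pi.single a 1)).det = (MY K (Y.erase a) C).det := by
  rw [Matrix.twoBlockTriangular_det' ((MY K Y C).updateRow a (Pi.single a 1)) (fun i => i = a)
    (by
      rintro i rfl j hj
      rw [Matrix.updateRow_self]
      exact Pi.single_eq_of_ne hj 1)]
  rw [Matrix.twoBlockTriangular_det' (MY K (Y.erase a) C) (fun i => i = a)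
    (by
      rintro i rfl j hj
      have hij : i ≠ j := fun h => hj h.symm
      simp [MY, haC, hij, Finset.mem_erase])]
  congr 1
  · congr 1
    ext i j
    show ((MY K Y C).updateRow a (Pi.single a 1)) (i : Fin n) (j : Fin n)
      = (MY K (Y.erase a) C) (i : Fin n) (j : Fin n)
    rw [show (i : Fin n) = a from i.2, show (j : Fin n) = a from j.2]
    simp [Matrix.updateRow_self, MY, haC, Finset.mem_erase]
  · congr 1
    ext i j
    have hi : (i : Fin n) ≠ a := i.2
    have hj : (j : Fin n) ≠ a := j.2
    show ((MY K Y C).updateRow a (Pi.single a 1)) (i : Fin n) (j : Fin n)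
      = (MY K (Y.erase a) C) (i : Fin n) (j : Fin n)
    rw [Matrix.updateRow_ne hi]
    simp [MY, Finset.mem_erase, hi, hj]

lemma det_MY (K : Matrix (Fin n) (Fin n) ℂ) (C : Finset (Fin n)) :
    ∀ Y : Finset (Fin n), C ⊆ Y →
      (MY K Y C).det = ∑ T ∈ C.powerset, (-1 : ℂ) ^ T.card * (MY K (Y \ T) ∅).det := by
  induction C using Finset.induction_on with
  | empty => intro Y _; simp
  | @insert a C ha ih =>
    intro Y hsub
    have hCY : C ⊆ Y := (Finset.subset_insert a C).trans hsub
    have hCY' : C ⊆ Y.erase a := fun x hx =>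
      Finset.mem_erase.mpr ⟨fun h => ha (h ▸ hx), hCY hx⟩
    have key1 : MY K Y (insert a C) =
        (MY K Y C).updateRow a ((MY K Y C) a + (-1 : ℂ) • (Pi.single a 1 : Fin n → ℂ)) := by
      ext i j
      by_cases hia : i = a
      · subst hia
        by_cases hij : i = j
        · subst hij
          simp [MY, Matrix.updateRow_self, ha, Pi.single_apply, sub_eq_add_neg]
        · simp [MY, Matrix.updateRow_self, ha, hij, Pi.single_apply, Ne.symm hij]
      · rw [Matrix.updateRow_ne hia]
        simp [MY, hia, Finset.mem_insert]
    rw [key1, Matrix.det_updateRow_add, Matrix.det_updateRow_smul,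
      Matrix.updateRow_eq_self, det_update K Y C a ha, ih Y hCY, ih (Y.erase a) hCY',
      Finset.sum_powerset_insert ha]
    congr 1
    rw [Finset.mul_sum]
    refine Finset.sum_congr rfl fun T hT => ?_
    have haT : a ∉ T := fun h => ha (Finset.mem_powerset.mp hT h)
    have hYT : Y \ insert a T = (Y.erase a) \ T := by
      ext x
      simp only [Finset.mem_sdiff, Finset.mem_insert, Finset.mem_erase]
      tauto
    rw [Finset.card_insert_of_notMem haT, hYT, pow_succ]
    ring

/-- The equivalence between `A ⊕ B` and `A ∪ B` for disjoint finsets. -/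
def unionEquiv (A B : Finset (Fin n)) (hAB : Disjoint A B) :
    (A ⊕ B : Type) ≃ {i : Fin n // i ∈ A ∪ B} where
  toFun := Sum.elim (fun a => ⟨a.1, Finset.mem_union_left _ a.2⟩)
    fun b => ⟨b.1, Finset.mem_union_right _ b.2⟩
  invFun x :=
    if h : x.1 ∈ A then Sum.inl ⟨x.1, h⟩
    else Sum.inr ⟨x.1, (Finset.mem_union.mp x.2).resolve_left h⟩
  left_inv := by
    rintro (⟨x, hx⟩ | ⟨x, hx⟩)
    · simp [hx]
    · simp [Finset.disjoint_right.mp hAB hx]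
  right_inv := by
    rintro ⟨x, hx⟩
    by_cases h : x ∈ A <;> simp [h]

lemma det_MY_block (K : Matrix (Fin n) (Fin n) ℂ) (A B : Finset (Fin n))
    (hAB : Disjoint A B) :
    (MY K (A ∪ B) A).det =
      (Matrix.fromBlocks (kSub K A A - 1) (kSub K A B) (kSub K B A) (kSub K B B)).det := by
  rw [Matrix.twoBlockTriangular_det (MY K (A ∪ B) A) (fun i => i ∈ A ∪ B)
    (by
      intro i hi j hj
      have hiA : i ∉ A := fun h => hi (Finset.mem_union_left _ h)
      have hiB : i ∉ B := fun h => hi (Finset.mem_union_right _ h)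
      have hij : i ≠ j := by rintro rfl; exact hi hj
      simp [MY, hiA, hiB, hij])]
  have h2 : (Matrix.toSquareBlockProp (MY K (A ∪ B) A) (fun i => ¬ i ∈ A ∪ B)) = 1 := by
    ext i j
    have hi := i.2
    have hiA : (i : Fin n) ∉ A := fun h => hi (Finset.mem_union_left _ h)
    have hiB : (i : Fin n) ∉ B := fun h => hi (Finset.mem_union_right _ h)
    simp [Matrix.toSquareBlockProp, Matrix.toBlock, MY, Matrix.one_apply, hiA, hiB,
      Subtype.ext_iff]
  rw [h2, Matrix.det_one, mul_one]
  have hsub : (Matrix.toSquareBlockProp (MY K (A ∪ B) A) (fun i => i ∈ A ∪ B)).submatrix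
      (unionEquiv A B hAB) (unionEquiv A B hAB) =
      Matrix.fromBlocks (kSub K A A - 1) (kSub K A B) (kSub K B A) (kSub K B B) := by
    ext i j
    cases i with
    | inl i =>
      cases j with
      | inl j =>
        have hij : ((i : Fin n) = (j : Fin n)) ↔ i = j := Subtype.ext_iff.symm
        simp [Matrix.toSquareBlockProp, Matrix.toBlock, MY, unionEquiv, kSub,
          Matrix.submatrix_apply, i.2, j.2, Finset.mem_union_left, hij, Matrix.one_apply,
          Matrix.sub_apply]
      | inr j =>
        have hij : (i : Fin n) ≠ (j : Fin n) := fun h =>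
          Finset.disjoint_left.mp hAB i.2 (h ▸ j.2)
        simp [Matrix.toSquareBlockProp, Matrix.toBlock, MY, unionEquiv, kSub,
          Matrix.submatrix_apply, Finset.mem_union_left _ i.2, Finset.mem_union_right _ j.2,
          i.2, j.2, hij]
    | inr i =>
      have hiA : (i : Fin n) ∉ A := Finset.disjoint_right.mp hAB i.2
      cases j with
      | inl j =>
        simp [Matrix.toSquareBlockProp, Matrix.toBlock, MY, unionEquiv, kSub,
          Matrix.submatrix_apply, Finset.mem_union_right _ i.2, Finset.mem_union_left _ j.2,
          i.2, j.2, hiA]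
      | inr j =>
        simp [Matrix.toSquareBlockProp, Matrix.toBlock, MY, unionEquiv, kSub,
          Matrix.submatrix_apply, Finset.mem_union_right _ i.2, Finset.mem_union_right _ j.2,
          i.2, j.2, hiA]
  rw [← hsub, Matrix.det_submatrix_equiv_self]
  congr!

end Stmt6Aux

open Stmt6Aux in
theorem stmt_6 {n : ℕ} (K : Matrix (Fin n) (Fin n) ℂ) (p : Finset (Fin n) → ℝ)
    (hp : IsDPP K p) (A B : Finset (Fin n)) (hAB : Disjoint A B)
    (hA : IsUnit (kSub K A A - 1)) :
    ((∑ S ∈ Finset.univ.filter fun S => B ⊆ S ∧ A ∩ S = ∅, p S : ℝ) : ℂ) =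
      (-1 : ℂ) ^ A.card * (kSub K A A - 1).det *
        (kSub K B B - kSub K B A * (kSub K A A - 1)⁻¹ * kSub K A B).det := by
  classical
  obtain ⟨hp0, hp1, hpY⟩ := hp
  -- Step 1: inclusion-exclusion
  have step1 : ((∑ S ∈ Finset.univ.filter fun S => B ⊆ S ∧ A ∩ S = ∅, p S : ℝ) : ℂ) =
      ∑ T ∈ A.powerset, (-1 : ℂ) ^ T.card *
        ((∑ S ∈ Finset.univ.filter fun S => (B ∪ T) ⊆ S, p S : ℝ) : ℂ) := by
    push_cast
    simp only [Finset.sum_filter, Finset.mul_sum]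
    rw [Finset.sum_comm]
    refine Finset.sum_congr rfl fun S _ => Eq.symm ?_
    by_cases hB : B ⊆ S
    · have hrw : ∀ T ∈ A.powerset,
          ((-1 : ℂ) ^ T.card * if B ∪ T ⊆ S then (p S : ℂ) else 0) =
          if T ⊆ A ∩ S then (-1 : ℂ) ^ T.card * (p S : ℂ) else 0 := by
        intro T hTA
        by_cases hT : T ⊆ A ∩ S
        · rw [if_pos hT, if_pos (Finset.union_subset hB
            ((Finset.subset_inter_iff.mp hT).2))]
        · have : ¬ B ∪ T ⊆ S := fun h => hT (Finset.subset_inter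
            (Finset.mem_powerset.mp hTA) ((Finset.union_subset_iff.mp h).2))
          rw [if_neg this, mul_zero, if_neg hT]
      rw [Finset.sum_congr rfl hrw, ← Finset.sum_filter]
      have hfil : A.powerset.filter (fun T => T ⊆ A ∩ S) = (A ∩ S).powerset := by
        ext T
        simp only [Finset.mem_filter, Finset.mem_powerset]
        exact ⟨fun h => h.2, fun h => ⟨h.trans Finset.inter_subset_left, h⟩⟩
      rw [hfil, ← Finset.sum_mul]
      have hz : (∑ m ∈ (A ∩ S).powerset, (-1 : ℂ) ^ m.card) =
          if A ∩ S = ∅ then 1 else 0 := by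
        have h := Finset.sum_powerset_neg_one_pow_card (x := A ∩ S)
        calc (∑ m ∈ (A ∩ S).powerset, (-1 : ℂ) ^ m.card)
            = ((∑ m ∈ (A ∩ S).powerset, (-1 : ℤ) ^ m.card : ℤ) : ℂ) := by push_cast; rfl
          _ = _ := by rw [h]; split <;> simp
      rw [hz]
      by_cases hAS : A ∩ S = ∅ <;> simp [hAS, hB]
    · have hzero : ∀ T ∈ A.powerset,
          ((-1 : ℂ) ^ T.card * if B ∪ T ⊆ S then (p S : ℂ) else 0) = 0 := by
        intro T _
        rw [if_neg (fun h => hB ((Finset.union_subset_iff.mp h).1)), mul_zero]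
      rw [Finset.sum_eq_zero hzero, if_neg (fun h => hB h.1)]
  rw [step1]
  -- Step 2: DPP and det_MY_empty
  have step2 : ∀ T ∈ A.powerset,
      (-1 : ℂ) ^ T.card * ((∑ S ∈ Finset.univ.filter fun S => (B ∪ T) ⊆ S, p S : ℝ) : ℂ) =
      (-1 : ℂ) ^ T.card * (MY K (B ∪ T) ∅).det := by
    intro T _
    rw [hpY (B ∪ T), det_MY_empty]
  rw [Finset.sum_congr rfl step2]
  -- Step 3: sum over powerset = (-1)^|A| * det (MY K (A∪B) A)
  have step3 : ∑ T ∈ A.powerset, (-1 : ℂ) ^ T.card * (MY K (B ∪ T) ∅).det =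
      (-1 : ℂ) ^ A.card * (MY K (A ∪ B) A).det := by
    rw [det_MY K A (A ∪ B) Finset.subset_union_left, Finset.mul_sum]
    refine Finset.sum_nbij' (fun T => A \ T) (fun T => A \ T)
      (fun T hT => Finset.mem_powerset.mpr (Finset.sdiff_subset))
      (fun T hT => Finset.mem_powerset.mpr (Finset.sdiff_subset))
      (fun T hT => Finset.sdiff_sdiff_eq_self (Finset.mem_powerset.mp hT))
      (fun T hT => Finset.sdiff_sdiff_eq_self (Finset.mem_powerset.mp hT))
      (fun T hT => ?_)
    have hTA : T ⊆ A := Finset.mem_powerset.mp hT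
    have hset : (A ∪ B) \ (A \ T) = B ∪ T := by
      ext x
      have h1 : x ∈ B → x ∉ A := fun h => Finset.disjoint_right.mp hAB h
      have h2 : x ∈ T → x ∈ A := fun h => hTA h
      simp only [Finset.mem_sdiff, Finset.mem_union]
      tauto
    have hc : (A \ T).card + T.card = A.card := Finset.card_sdiff_add_card_eq_card hTA
    have hsq : ((-1 : ℂ) ^ (A \ T).card) * ((-1 : ℂ) ^ (A \ T).card) = 1 := by
      rw [← pow_add]
      exact Even.neg_one_pow ⟨_, rfl⟩
    have hsign : (-1 : ℂ) ^ A.card * (-1 : ℂ) ^ (A \ T).card = (-1 : ℂ) ^ T.card := by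
      calc (-1 : ℂ) ^ A.card * (-1 : ℂ) ^ (A \ T).card
          = ((-1 : ℂ) ^ (A \ T).card * (-1 : ℂ) ^ (A \ T).card) * (-1 : ℂ) ^ T.card := by
            rw [← hc, pow_add]; ring
        _ = (-1 : ℂ) ^ T.card := by rw [hsq, one_mul]
    rw [hset, ← hsign]
    ring
  rw [step3, det_MY_block K A B hAB]
  haveI := hA.invertible
  rw [Matrix.det_fromBlocks₁₁, Matrix.invOf_eq_nonsing_inv, mul_assoc]
end

section
/- Let K be an n×n complex matrix and p a determinantal point process with marginal kernel K. Then for every finset A of Fin n, the sum of p(S) over all finsets S with A ∩ S = ∅ equals det(I − K_A), where I is the identity matrix of size |A|. -/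
open Matrix

lemma det_piecewise {α : Type*} [Fintype α] [DecidableEq α] (M : Matrix α α ℂ)
    (s : Finset α) :
    (Matrix.of (s.piecewise (fun i => -(M i)) (fun i => (1 : Matrix α α ℂ) i))).det
      = (-1 : ℂ) ^ s.card *
        (M.submatrix (Subtype.val : {x // x ∈ s} → α) Subtype.val).det := by
  set N : Matrix α α ℂ :=
    Matrix.of (s.piecewise (fun i => -(M i)) (fun i => (1 : Matrix α α ℂ) i)) with hN
  have h0 : ∀ i, ¬ i ∈ s → ∀ j, j ∈ s → N i j = 0 := by
    intro i hi j hj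
    have hij : i ≠ j := fun h => hi (h ▸ hj)
    simp [hN, Finset.piecewise_eq_of_notMem _ _ _ hi, Matrix.one_apply_ne hij]
  rw [Matrix.twoBlockTriangular_det N (· ∈ s) h0]
  have h1 : N.toSquareBlockProp (· ∈ s)
      = -(M.submatrix (Subtype.val : {x // x ∈ s} → α) Subtype.val) := by
    ext i j
    simp [Matrix.toSquareBlockProp, hN, Finset.piecewise_eq_of_mem _ _ _ i.2]
  have h2 : N.toSquareBlockProp (fun i => ¬ i ∈ s) = 1 := by
    ext i j
    simp [Matrix.toSquareBlockProp, hN, Finset.piecewise_eq_of_notMem _ _ _ i.2,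
      Matrix.one_apply, Subtype.ext_iff]
  rw [h1, h2, Matrix.det_one, mul_one]
  convert Matrix.det_neg (M.submatrix (Subtype.val : {x // x ∈ s} → α) Subtype.val) using 2
  · congr 1
    exact ((Fintype.card_coe s).symm.trans (Fintype.card_congr (Equiv.refl _)))


lemma det_one_sub_sum {α : Type*} [Fintype α] [DecidableEq α] (M : Matrix α α ℂ) :
    (1 - M).det = ∑ s : Finset α, (-1 : ℂ) ^ s.card *
      (M.submatrix (Subtype.val : {x // x ∈ s} → α) Subtype.val).det := by
  have key : (1 - M).det = Matrix.detRowAlternating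
      ((fun i => -(M i)) + (fun i => (1 : Matrix α α ℂ) i)) := by
    congr 1
    ext i j
    simp [Matrix.sub_apply]
    ring
  rw [key]
  have h := MultilinearMap.map_add_univ
    (Matrix.detRowAlternating (R := ℂ) (n := α)).toMultilinearMap
    (fun i => -(M i)) (fun i => (1 : Matrix α α ℂ) i)
  rw [show ((Matrix.detRowAlternating (R := ℂ) (n := α)) : _) _ = _ from h]
  refine Finset.sum_congr rfl fun s _ => ?_
  exact det_piecewise M s

lemma det_one_sub_kSub {n : ℕ} (K : Matrix (Fin n) (Fin n) ℂ) (A : Finset (Fin n)) :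
    (1 - kSub K A A).det = ∑ Y ∈ A.powerset, (-1:ℂ)^Y.card * (kSub K Y Y).det := by
  rw [det_one_sub_sum]
  refine Finset.sum_nbij' (fun s => s.map (Function.Embedding.subtype _))
    (fun Y => Y.subtype (· ∈ A)) ?_ ?_ ?_ ?_ ?_
  · intro s _
    simp only [Finset.mem_powerset]
    intro x hx
    simp only [Finset.mem_map, Function.Embedding.coe_subtype] at hx
    obtain ⟨⟨y, hy⟩, _, rfl⟩ := hx
    exact hy
  · intro Y _; exact Finset.mem_univ _
  · intro s _
    ext ⟨x, hx⟩
    simp only [Finset.mem_subtype, Finset.mem_map, Function.Embedding.coe_subtype]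
    constructor
    · rintro ⟨⟨y, hy⟩, hys, rfl⟩
      exact hys
    · intro h
      exact ⟨⟨x, hx⟩, h, rfl⟩
  · intro Y hY
    show (Y.subtype (· ∈ A)).map (Function.Embedding.subtype _) = Y
    rw [Finset.subtype_map]
    exact Finset.filter_true_of_mem fun x hx => Finset.mem_powerset.mp hY hx
  · intro s _
    congr 1
    · simp
    · -- det equality via reindexing equivalence
      set Y := s.map (Function.Embedding.subtype _) with hY
      let e : {x // x ∈ s} ≃ {x // x ∈ Y} :=
        { toFun := fun i => ⟨i.1.1, by simp [hY]⟩
          invFun := fun y => ⟨⟨y.1, by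
              have := y.2
              simp only [hY, Finset.mem_map, Function.Embedding.coe_subtype] at this
              obtain ⟨⟨z, hz⟩, _, rfl⟩ := this
              exact hz⟩, by
              have := y.2
              simp only [hY, Finset.mem_map, Function.Embedding.coe_subtype] at this
              obtain ⟨⟨z, hz⟩, hzs, rfl⟩ := this
              exact hzs⟩
          left_inv := fun i => rfl
          right_inv := fun y => rfl }
      show ((kSub K A A).submatrix Subtype.val Subtype.val).det = (kSub K Y Y).det
      have hEq : kSub K Y Y =
          ((kSub K A A).submatrix Subtype.val Subtype.val).submatrix e.symm e.symm := by
        ext y y'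
        rfl
      rw [hEq, Matrix.det_submatrix_equiv_self]


lemma incl_excl {n : ℕ} (p : Finset (Fin n) → ℝ) (A : Finset (Fin n)) :
    (∑ S ∈ Finset.univ.filter fun S => A ∩ S = ∅, p S)
      = ∑ Y ∈ A.powerset, (-1 : ℝ) ^ Y.card *
          ∑ S ∈ Finset.univ.filter fun S => Y ⊆ S, p S := by
  have step : ∀ Y : Finset (Fin n),
      (-1 : ℝ) ^ Y.card * ∑ S ∈ Finset.univ.filter fun S => Y ⊆ S, p S
        = ∑ S : Finset (Fin n), if Y ⊆ S then (-1 : ℝ) ^ Y.card * p S else 0 := by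
    intro Y
    rw [Finset.mul_sum, Finset.sum_filter]
  simp_rw [step]
  rw [Finset.sum_comm]
  have inner : ∀ S : Finset (Fin n),
      (∑ Y ∈ A.powerset, if Y ⊆ S then (-1 : ℝ) ^ Y.card * p S else 0)
        = (if A ∩ S = ∅ then (1 : ℝ) else 0) * p S := by
    intro S
    rw [← Finset.sum_filter]
    have hfil : A.powerset.filter (· ⊆ S) = (A ∩ S).powerset := by
      ext Y
      simp only [Finset.mem_filter, Finset.mem_powerset, Finset.subset_inter_iff]
    rw [hfil, ← Finset.sum_mul]
    congr 1
    have h := congrArg (fun z : ℤ => (z : ℝ))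
      (Finset.sum_powerset_neg_one_pow_card (x := A ∩ S))
    push_cast at h
    simpa using h
  simp_rw [inner]
  rw [Finset.sum_filter]
  exact (Finset.sum_congr rfl fun S _ => by split <;> simp).symm

theorem stmt_8 {n : ℕ} (K : Matrix (Fin n) (Fin n) ℂ) (p : Finset (Fin n) → ℝ)
    (hp : IsDPP K p) (A : Finset (Fin n)) :
    ((∑ S ∈ Finset.univ.filter fun S => A ∩ S = ∅, p S : ℝ) : ℂ) =
      (1 - kSub K A A).det := by
  rw [incl_excl p A, det_one_sub_kSub K A, Complex.ofReal_sum]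
  refine Finset.sum_congr rfl fun Y _ => ?_
  rw [Complex.ofReal_mul, hp.2.2 Y]
  norm_num
end

section
/- Let K be an n×n complex matrix and p a determinantal point process with marginal kernel K. Then for every finset Y of Fin n, the individual probability p(Y) (regarded as a complex number) equals (−1)^{n − |Y|} · det(K − 𝟙_{Yᶜ}), where Yᶜ is the complement of Y in Fin n. -/
open Matrix

/-- The diagonal 0/1 indicator matrix of a finset `J`. -/
def indMat {n : ℕ} (J : Finset (Fin n)) : Matrix (Fin n) (Fin n) ℂ :=
  Matrix.diagonal fun i => if i ∈ J then 1 else 0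

theorem dppAuxZero {n : ℕ} (K : Matrix (Fin n) (Fin n) ℂ) (Y S : Finset (Fin n)) (h : ¬ Y ⊆ S) :
    (Matrix.of (S.piecewise K (-(indMat Yᶜ)))).det = 0 := by
  obtain ⟨i, hiY, hiS⟩ := Finset.not_subset.mp h
  apply Matrix.det_eq_zero_of_row_eq_zero i
  intro j
  simp only [Matrix.of_apply, Finset.piecewise, hiS, if_false, Pi.neg_apply, indMat,
    Matrix.neg_apply, Matrix.diagonal_apply]
  by_cases hij : i = j
  · subst hij; simp [hiY]
  · simp [hij]

theorem dppAuxDet {n : ℕ} (K : Matrix (Fin n) (Fin n) ℂ) (Y S : Finset (Fin n)) (h : Y ⊆ S) :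
    (Matrix.of (S.piecewise K (-(indMat Yᶜ)))).det
      = (-1 : ℂ) ^ (n - S.card) * (kSub K S S).det := by
  set v : Fin n → ℂ := fun i => if i ∈ S then 1 else -1 with hv
  set M : Matrix (Fin n) (Fin n) ℂ := Matrix.of (S.piecewise K (indMat Yᶜ)) with hM
  have e1 : Matrix.of (S.piecewise K (-(indMat Yᶜ))) = Matrix.of (fun i j => v i * M i j) := by
    ext i j
    by_cases hi : i ∈ S <;>
      simp [hv, hM, hi, Finset.piecewise]
  have e2 : ∏ i, v i = (-1 : ℂ) ^ (n - S.card) := by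
    rw [← Finset.prod_filter_mul_prod_filter_not Finset.univ (· ∈ S)]
    rw [Finset.prod_congr rfl (fun i hi => if_pos (Finset.mem_filter.mp hi).2),
      Finset.prod_const_one, one_mul,
      Finset.prod_congr rfl (fun i hi => if_neg (Finset.mem_filter.mp hi).2),
      Finset.prod_const]
    congr 1
    have hc : Finset.filter (fun i => i ∉ S) Finset.univ = Sᶜ := by ext x; simp
    rw [hc, Finset.card_compl]
    simp
  have e3 : M.det = (kSub K S S).det := by
    rw [Matrix.twoBlockTriangular_det M (· ∈ S)]
    · have h1 : Matrix.toSquareBlockProp M (· ∈ S) = kSub K S S := by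
        ext ⟨i, hi⟩ ⟨j, hj⟩
        simp [Matrix.toSquareBlockProp, hM, kSub, Finset.piecewise, hi]
      have h2 : Matrix.toSquareBlockProp M (fun i => ¬ i ∈ S) = 1 := by
        ext ⟨i, hi⟩ ⟨j, hj⟩
        have hiY : i ∉ Y := fun hy => hi (h hy)
        by_cases hij : i = j
        · subst hij
          simp [Matrix.toSquareBlockProp, hM, Finset.piecewise, hi,
            indMat, Matrix.one_apply, hiY]
        · have : (⟨i, hi⟩ : {a // ¬ a ∈ S}) ≠ ⟨j, hj⟩ := by simp [Subtype.ext_iff, hij]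
          simp [Matrix.toSquareBlockProp, hM, Finset.piecewise, hi,
            indMat, Matrix.one_apply, Matrix.diagonal_apply_ne _ hij, this]
      rw [h1, h2, Matrix.det_one, mul_one]
      congr!
    · intro i hiS j hjS
      have hij : i ≠ j := fun hij => hiS (hij ▸ hjS)
      simp [hM, Finset.piecewise, hiS, indMat,
        Matrix.diagonal_apply_ne _ hij]
  calc (Matrix.of (S.piecewise K (-(indMat Yᶜ)))).det
      = (Matrix.of (fun i j => v i * M i j)).det := by rw [e1]
    _ = (∏ i, v i) * M.det := Matrix.det_mul_column v M
    _ = (-1 : ℂ) ^ (n - S.card) * (kSub K S S).det := by rw [e3]; rw [e2]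

theorem dppAuxInner {n : ℕ} (Y U : Finset (Fin n)) :
    ∑ S ∈ Finset.univ.filter (fun S => Y ⊆ S ∧ S ⊆ U), (-1 : ℂ) ^ (S.card - Y.card)
      = if U = Y then 1 else 0 := by
  by_cases hYU : Y ⊆ U
  · have key : ∑ S ∈ Finset.univ.filter (fun S => Y ⊆ S ∧ S ⊆ U),
        (-1 : ℂ) ^ (S.card - Y.card)
        = ∑ T ∈ (U \ Y).powerset, (-1 : ℂ) ^ T.card := by
      apply Finset.sum_nbij' (i := fun S => S \ Y) (j := fun T => T ∪ Y)
      · intro S hS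
        simp only [Finset.mem_filter, Finset.mem_univ, true_and] at hS
        exact Finset.mem_powerset.mpr (Finset.sdiff_subset_sdiff hS.2 le_rfl)
      · intro T hT
        simp only [Finset.mem_powerset] at hT
        simp only [Finset.mem_filter, Finset.mem_univ, true_and]
        exact ⟨Finset.subset_union_right, Finset.union_subset
          (hT.trans (Finset.sdiff_subset)) hYU⟩
      · intro S hS
        simp only [Finset.mem_filter, Finset.mem_univ, true_and] at hS
        exact Finset.sdiff_union_of_subset hS.1
      · intro T hT
        simp only [Finset.mem_powerset] at hT
        have : Disjoint T Y := Finset.disjoint_of_subset_left hT (Finset.sdiff_disjoint)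
        rw [Finset.union_sdiff_cancel_right this]
      · intro S hS
        simp only [Finset.mem_filter, Finset.mem_univ, true_and] at hS
        rw [Finset.card_sdiff_of_subset hS.1]
    have key2 : ∑ T ∈ (U \ Y).powerset, (-1 : ℂ) ^ T.card
        = ((if U \ Y = ∅ then 1 else 0 : ℤ) : ℂ) := by
      rw [← Finset.sum_powerset_neg_one_pow_card]
      push_cast
      rfl
    rw [key, key2]
    by_cases hUY : U = Y
    · simp [hUY]
    · have : U \ Y ≠ ∅ := by
        rw [Ne, Finset.sdiff_eq_empty_iff_subset]
        exact fun hsub => hUY (Finset.Subset.antisymm hsub hYU)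
      simp [this, hUY]
  · have h0 : Finset.univ.filter (fun S => Y ⊆ S ∧ S ⊆ U) = ∅ := by
      ext S; simp only [Finset.mem_filter, Finset.mem_univ, true_and, Finset.notMem_empty,
        iff_false]
      rintro ⟨h1, h2⟩; exact hYU (h1.trans h2)
    have hUY : U ≠ Y := fun h => hYU (h ▸ Finset.Subset.refl Y)
    simp [h0, hUY]

theorem stmt_9 {n : ℕ} (K : Matrix (Fin n) (Fin n) ℂ) (p : Finset (Fin n) → ℝ)
    (hp : IsDPP K p) (Y : Finset (Fin n)) :
    ((p Y : ℝ) : ℂ) = (-1 : ℂ) ^ (n - Y.card) * (K - indMat Yᶜ).det := by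
  obtain ⟨-, -, hK⟩ := hp
  have hdet : (K - indMat Yᶜ).det
      = ∑ S ∈ Finset.univ.filter (fun S => Y ⊆ S),
          (-1 : ℂ) ^ (n - S.card) * (kSub K S S).det := by
    have hA : (K - indMat Yᶜ).det
        = ∑ S : Finset (Fin n), (Matrix.of (S.piecewise K (-(indMat Yᶜ)))).det := by
      have h : (K - indMat Yᶜ) = (K + (-(indMat Yᶜ))) := by rw [sub_eq_add_neg]
      rw [h]
      exact (Matrix.detRowAlternating (R := ℂ) (n := Fin n)).toMultilinearMap.map_add_univ
        K (-(indMat Yᶜ))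
    rw [hA, ← Finset.sum_filter_add_sum_filter_not Finset.univ (fun S => Y ⊆ S),
      Finset.sum_congr rfl (fun S hS => dppAuxDet K Y S (Finset.mem_filter.mp hS).2),
      Finset.sum_congr rfl (fun S hS => dppAuxZero K Y S (Finset.mem_filter.mp hS).2),
      Finset.sum_const_zero, add_zero]
  rw [hdet, Finset.mul_sum]
  have hterm : ∀ S ∈ Finset.univ.filter (fun S => Y ⊆ S),
      (-1 : ℂ) ^ (n - Y.card) * ((-1 : ℂ) ^ (n - S.card) * (kSub K S S).det)
        = (-1 : ℂ) ^ (S.card - Y.card) * (kSub K S S).det := by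
    intro S hS
    have h1 : Y.card ≤ S.card := Finset.card_le_card (Finset.mem_filter.mp hS).2
    have h2 : S.card ≤ n := by simpa using Finset.card_le_univ S
    rw [← mul_assoc, ← pow_add]
    congr 1
    have h3 : (n - Y.card) + (n - S.card) = 2 * (n - S.card) + (S.card - Y.card) := by omega
    rw [h3, pow_add, pow_mul]
    simp
  rw [Finset.sum_congr rfl hterm]
  have hsub : ∀ S : Finset (Fin n), (kSub K S S).det
      = ∑ U ∈ Finset.univ.filter (fun U => S ⊆ U), ((p U : ℝ) : ℂ) := by
    intro S
    rw [← hK S]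
    push_cast
    rfl
  calc ((p Y : ℝ) : ℂ)
      = ∑ U ∈ Finset.univ, (if U = Y then 1 else 0 : ℂ) * ((p U : ℝ) : ℂ) := by simp
    _ = ∑ U ∈ Finset.univ, ∑ S ∈ Finset.univ.filter (fun S => Y ⊆ S ∧ S ⊆ U),
          (-1 : ℂ) ^ (S.card - Y.card) * ((p U : ℝ) : ℂ) := by
        refine Finset.sum_congr rfl fun U _ => ?_
        rw [← Finset.sum_mul, dppAuxInner Y U]
    _ = ∑ S ∈ Finset.univ.filter (fun S => Y ⊆ S),
          ∑ U ∈ Finset.univ.filter (fun U => S ⊆ U),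
            (-1 : ℂ) ^ (S.card - Y.card) * ((p U : ℝ) : ℂ) := by
        refine (Finset.sum_comm' ?_).symm
        intro S U
        simp only [Finset.mem_filter, Finset.mem_univ, true_and, and_true]
    _ = ∑ S ∈ Finset.univ.filter (fun S => Y ⊆ S),
          (-1 : ℂ) ^ (S.card - Y.card) * (kSub K S S).det := by
        refine Finset.sum_congr rfl fun S _ => ?_
        rw [hsub S, Finset.mul_sum]
end

section
/- For every n×n complex matrix K and every finset J of Fin n, det(K − 𝟙_J) = ∑_{T ⊆ J} (−1)^{|T|} · det(K_{Tᶜ}), where T ranges over all finsets contained in J, Tᶜ denotes the complement of T in Fin n, and K_{Tᶜ} is the principal submatrix of K indexed by Tᶜ. -/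
open Matrix

lemma key_term {n : ℕ} (K : Matrix (Fin n) (Fin n) ℂ) (T : Finset (Fin n)) :
    (Matrix.of (T.piecewise (fun i => -(Pi.single i (1:ℂ))) K)).det
      = (-1 : ℂ) ^ T.card * (kSub K Tᶜ Tᶜ).det := by
  classical
  let e : {i // i ∈ T} ⊕ {i // i ∉ T} ≃ Fin n := Equiv.sumCompl _
  let e' : {i // i ∉ T} ≃ ↥(Tᶜ) := Equiv.subtypeEquivRight (by simp)
  rw [← Matrix.det_submatrix_equiv_self e]
  have hM : (Matrix.of (T.piecewise (fun i => -(Pi.single i (1:ℂ))) K)).submatrix e e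
      = Matrix.fromBlocks (-1 : Matrix {i // i ∈ T} {i // i ∈ T} ℂ) 0
          (Matrix.of fun i j => K i.1 j.1) ((kSub K Tᶜ Tᶜ).submatrix e' e') := by
    ext i j
    rcases i with i | i <;> rcases j with j | j <;>
      simp [e, e', Finset.piecewise, i.2, Pi.single_apply, kSub,
        Matrix.one_apply, eq_comm]
    exact fun (h : (i : Fin n) = (j : Fin n)) => j.2 (h ▸ i.2)
  rw [hM, Matrix.det_fromBlocks_zero₁₂, Matrix.det_submatrix_equiv_self]
  congr 1
  rw [show (-1 : Matrix {i // i ∈ T} {i // i ∈ T} ℂ) = -(1) from rfl, Matrix.det_neg]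
  simp

theorem stmt_11 {n : ℕ} (K : Matrix (Fin n) (Fin n) ℂ) (J : Finset (Fin n)) :
    (K - indMat J).det =
      ∑ T ∈ J.powerset, (-1 : ℂ) ^ T.card * (kSub K Tᶜ Tᶜ).det := by
  classical
  have hrows : (K - indMat J) =
      Matrix.of (J.piecewise ((fun i => -(Pi.single i (1:ℂ))) + fun i => K i) (fun i => K i)) := by
    ext i j
    by_cases h : i ∈ J <;>
      simp [Finset.piecewise, h, indMat, Matrix.diagonal, Pi.single_apply, eq_comm, sub_eq_add_neg,
        add_comm]
  have expand := (Matrix.detRowAlternating :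
      ((Fin n) → ℂ) [⋀^Fin n]→ₗ[ℂ] ℂ).toMultilinearMap.map_piecewise_add
      (fun i => -(Pi.single i (1:ℂ))) (fun i => K i) J
  calc (K - indMat J).det
      = (Matrix.detRowAlternating :
          ((Fin n) → ℂ) [⋀^Fin n]→ₗ[ℂ] ℂ).toMultilinearMap
          (J.piecewise ((fun i => -(Pi.single i (1:ℂ))) + fun i => K i) (fun i => K i)) := by
        rw [hrows]; rfl
    _ = ∑ T ∈ J.powerset, (Matrix.detRowAlternating :
          ((Fin n) → ℂ) [⋀^Fin n]→ₗ[ℂ] ℂ).toMultilinearMap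
          (T.piecewise (fun i => -(Pi.single i (1:ℂ))) (fun i => K i)) := expand
    _ = ∑ T ∈ J.powerset, (-1 : ℂ) ^ T.card * (kSub K Tᶜ Tᶜ).det := by
        refine Finset.sum_congr rfl fun T _ => ?_
        rw [← key_term K T]; rfl
end

section
/- Let K be an n×n complex matrix. If there exists a determinantal point process with marginal kernel K, then for every finset J of Fin n, the complex number (−1)^{|J|} · det(K − 𝟙_J) is a nonnegative real number. -/
open Matrix

open Finset

lemma det_rows_single {n : ℕ} (s : Finset (Fin n)) (A : Matrix (Fin n) (Fin n) ℂ) :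
    (Matrix.of fun i j => if i ∈ s then (if j = i then (1:ℂ) else 0) else A i j).det
      = (kSub A sᶜ sᶜ).det := by
  set N : Matrix (Fin n) (Fin n) ℂ :=
    Matrix.of fun i j => if i ∈ s then (if j = i then (1:ℂ) else 0) else A i j with hN
  let e : {x : Fin n // x ∈ s} ⊕ {x : Fin n // ¬ x ∈ s} ≃ Fin n := Equiv.sumCompl _
  have h1 : N.det = (N.submatrix e e).det := (Matrix.det_submatrix_equiv_self e N).symm
  have h2 : N.submatrix ⇑e ⇑e =
      Matrix.fromBlocks 1 0 (Matrix.of fun (i : {x : Fin n // ¬ x ∈ s}) (j : {x : Fin n // x ∈ s}) => A i.1 j.1)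
        (Matrix.of fun (i : {x : Fin n // ¬ x ∈ s}) (j : {x : Fin n // ¬ x ∈ s}) => A i.1 j.1) := by
    ext (i | i) (j | j)
    · simp [e, N, Matrix.one_apply, i.2, eq_comm]
    · have : (i : Fin n) ≠ (j : Fin n) := fun h => j.2 (h ▸ i.2)
      simp [e, N, i.2, this, eq_comm]
    · simp [e, N, i.2]
    · simp [e, N, i.2]
  have h3 : (kSub A sᶜ sᶜ).det =
      (Matrix.of fun (i : {x : Fin n // ¬ x ∈ s}) (j : {x : Fin n // ¬ x ∈ s}) => A i.1 j.1).det := by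
    let e2 : {x : Fin n // ¬ x ∈ s} ≃ {x : Fin n // x ∈ sᶜ} :=
      Equiv.subtypeEquivRight (by simp)
    have := Matrix.det_submatrix_equiv_self e2 (kSub A sᶜ sᶜ)
    rw [← this]
    congr 1
  rw [h1, h2, h3, Matrix.det_fromBlocks_zero₁₂, Matrix.det_one, one_mul]

lemma det_sub_ind {n : ℕ} (K : Matrix (Fin n) (Fin n) ℂ) (J : Finset (Fin n)) :
    (K - indMat J).det = ∑ s ∈ J.powerset, (-1:ℂ)^s.card * (kSub K sᶜ sᶜ).det := by
  classical
  have h0 : K - indMat J = (-(indMat J)) + K := (neg_add_eq_sub _ _).symm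
  have hexp : (K - indMat J).det
      = ∑ s : Finset (Fin n), (Matrix.of (s.piecewise (-(indMat J)) K)).det := by
    rw [h0]
    exact Matrix.detRowAlternating.toMultilinearMap.map_add_univ (-(indMat J)) K
  rw [hexp, ← Finset.sum_subset (Finset.subset_univ J.powerset)]
  · apply Finset.sum_congr rfl
    intro s hs
    rw [Finset.mem_powerset] at hs
    set N : Matrix (Fin n) (Fin n) ℂ :=
      Matrix.of fun i j => if i ∈ s then (if j = i then (1:ℂ) else 0) else K i j with hN
    have hrw : (Matrix.of (s.piecewise (-(indMat J)) K))
        = Matrix.of (s.piecewise (fun i => (fun _ : Fin n => (-1:ℂ)) i • N i) N) := by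
      funext i j
      by_cases hi : i ∈ s
      · have hiJ : i ∈ J := hs hi
        simp only [Finset.piecewise, Pi.neg_apply, Pi.smul_apply,
          smul_eq_mul, hN, Matrix.of_apply, if_pos hi, indMat, Matrix.diagonal_apply, hiJ]
        by_cases hij : i = j
        · subst hij; simp [hiJ]
        · simp [hij, eq_comm, Ne.symm hij]
      · simp [Finset.piecewise, hi, hN]
    rw [hrw]
    have hm := Matrix.detRowAlternating.toMultilinearMap.map_piecewise_smul
      (fun _ : Fin n => (-1:ℂ)) N s
    have : (Matrix.of (s.piecewise (fun i => (fun _ : Fin n => (-1:ℂ)) i • N i) N)).det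
        = (∏ _i ∈ s, (-1:ℂ)) • N.det := hm
    rw [this, Finset.prod_const, smul_eq_mul, det_rows_single s K]
  · intro s _ hs
    rw [Finset.mem_powerset] at hs
    obtain ⟨i, his, hiJ⟩ : ∃ i, i ∈ s ∧ i ∉ J := by
      by_contra hc
      push_neg at hc
      exact hs fun x hx => hc x hx
    apply Matrix.det_eq_zero_of_row_eq_zero i
    intro j
    simp [Finset.piecewise, his, indMat, Matrix.diagonal_apply, hiJ]
lemma myInnerSum {α : Type*} [DecidableEq α] [Fintype α] (J S : Finset α) :
    (∑ s ∈ J.powerset.filter (fun s => Sᶜ ⊆ s), (-1:ℂ)^s.card)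
      = if S = Jᶜ then (-1:ℂ)^J.card else 0 := by
  by_cases hSJ : Sᶜ ⊆ J
  · rw [Finset.sum_nbij' (i := fun s => s \ Sᶜ) (j := fun t => t ∪ Sᶜ)
      (t := (J \ Sᶜ).powerset) (g := fun t => (-1:ℂ)^(t ∪ Sᶜ).card)]
    · have hdisj : ∀ t ∈ (J \ Sᶜ).powerset, Disjoint t Sᶜ := by
        intro t ht
        rw [mem_powerset] at ht
        exact (Finset.disjoint_sdiff.symm.mono_left ht).symm.symm
      have : ∀ t ∈ (J \ Sᶜ).powerset, (-1:ℂ)^(t ∪ Sᶜ).card = (-1:ℂ)^Sᶜ.card * (-1:ℂ)^t.card := by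
        intro t ht
        rw [Finset.card_union_of_disjoint (hdisj t ht), pow_add, mul_comm]
      rw [Finset.sum_congr rfl this, ← Finset.mul_sum]
      have hz : (∑ t ∈ (J \ Sᶜ).powerset, (-1:ℂ)^t.card)
          = if J \ Sᶜ = ∅ then 1 else 0 := by
        have := Finset.sum_powerset_neg_one_pow_card (x := J \ Sᶜ)
        have := congrArg (Int.cast : ℤ → ℂ) this
        push_cast at this
        convert this using 2
      rw [hz]
      by_cases he : J \ Sᶜ = ∅
      · have hJS : J = Sᶜ := le_antisymm (Finset.sdiff_eq_empty_iff_subset.mp he) hSJ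
        have hS : S = Jᶜ := by rw [hJS, compl_compl]
        rw [if_pos he, if_pos hS, mul_one, hJS]
      · have hS : ¬ S = Jᶜ := by
          intro hS
          exact he (by rw [hS, compl_compl, sdiff_self]; rfl)
        rw [if_neg he, if_neg hS, mul_zero]
    · intro s hs
      rw [mem_filter, mem_powerset] at hs
      rw [mem_powerset]
      exact Finset.sdiff_subset_sdiff hs.1 le_rfl
    · intro t ht
      rw [mem_powerset] at ht
      rw [mem_filter, mem_powerset]
      exact ⟨Finset.union_subset (ht.trans (Finset.sdiff_subset)) hSJ, Finset.subset_union_right⟩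
    · intro s hs
      rw [mem_filter, mem_powerset] at hs
      exact Finset.sdiff_union_of_subset hs.2
    · intro t ht
      rw [mem_powerset] at ht
      have : Disjoint t Sᶜ := Finset.disjoint_of_subset_left ht Finset.sdiff_disjoint
      exact Finset.union_sdiff_cancel_right this
    · intro s hs
      rw [mem_filter, mem_powerset] at hs
      rw [Finset.sdiff_union_of_subset hs.2]
  · have hempty : J.powerset.filter (fun s => Sᶜ ⊆ s) = ∅ := by
      rw [Finset.filter_eq_empty_iff]
      intro s hs hSs
      rw [mem_powerset] at hs
      exact hSJ (hSs.trans hs)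
    have hS : ¬ S = Jᶜ := fun hS => hSJ (by rw [hS, compl_compl])
    rw [hempty, Finset.sum_empty, if_neg hS]

theorem stmt_12 {n : ℕ} (K : Matrix (Fin n) (Fin n) ℂ)
    (h : ∃ p : Finset (Fin n) → ℝ, IsDPP K p) :
    ∀ J : Finset (Fin n),
      ∃ r : ℝ, 0 ≤ r ∧ (-1 : ℂ) ^ J.card * (K - indMat J).det = r := by
  classical
  obtain ⟨p, hp0, _, hpY⟩ := h
  intro J
  refine ⟨p Jᶜ, hp0 Jᶜ, ?_⟩
  rw [det_sub_ind, Finset.mul_sum]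
  have step1 : ∀ s ∈ J.powerset,
      (-1:ℂ)^J.card * ((-1:ℂ)^s.card * (kSub K sᶜ sᶜ).det)
        = ∑ S : Finset (Fin n),
            (if Sᶜ ⊆ s then (-1:ℂ)^J.card * (-1:ℂ)^s.card * (p S : ℂ) else 0) := by
    intro s _
    rw [← hpY sᶜ]
    push_cast
    rw [Finset.sum_filter, Finset.mul_sum, Finset.mul_sum]
    apply Finset.sum_congr rfl
    intro S _
    simp only [show (sᶜ ⊆ S) ↔ (Sᶜ ⊆ s) from by rw [← Finset.le_iff_subset, ← Finset.le_iff_subset]; exact compl_le_iff_compl_le]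
    split <;> ring
  rw [Finset.sum_congr rfl step1, Finset.sum_comm]
  have step2 : ∀ S : Finset (Fin n),
      (∑ s ∈ J.powerset,
        (if Sᶜ ⊆ s then (-1:ℂ)^J.card * (-1:ℂ)^s.card * (p S : ℂ) else 0))
        = (if S = Jᶜ then (p S : ℂ) else 0) := by
    intro S
    have : ∀ s ∈ J.powerset,
        (if Sᶜ ⊆ s then (-1:ℂ)^J.card * (-1:ℂ)^s.card * (p S : ℂ) else 0)
          = (-1:ℂ)^J.card * (p S : ℂ) * (if Sᶜ ⊆ s then (-1:ℂ)^s.card else 0) := by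
      intro s _
      split <;> ring
    rw [Finset.sum_congr rfl this, ← Finset.mul_sum, ← Finset.sum_filter, myInnerSum]
    have h4 : ((-1:ℂ)^J.card) * ((-1:ℂ)^J.card) = 1 := by
      rw [← pow_add]; exact Even.neg_one_pow ⟨J.card, rfl⟩
    split
    · calc (-1:ℂ)^J.card * (p S : ℂ) * (-1:ℂ)^J.card
          = (p S : ℂ) * ((-1:ℂ)^J.card * (-1:ℂ)^J.card) := by ring
        _ = (p S : ℂ) := by rw [h4, mul_one]
    · rw [mul_zero]
  rw [Finset.sum_congr rfl (fun S _ => step2 S), Finset.sum_ite_eq' Finset.univ Jᶜ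
    (fun S => (p S : ℂ)), if_pos (Finset.mem_univ _)]
end

section
/- (Brunel's admissibility criterion.) Let K be an n×n complex matrix. There exists a determinantal point process with marginal kernel K if and only if for every finset J of Fin n, the complex number (−1)^{|J|} · det(K − 𝟙_J) is a nonnegative real number. -/
open Matrix

namespace Stmt13Aux

open Finset

lemma powC {α : Type*} [DecidableEq α] (x : Finset α) :
    (∑ m ∈ x.powerset, (-1 : ℂ) ^ m.card) = if x = ∅ then 1 else 0 := by
  have := Finset.sum_powerset_neg_one_pow_card (x := x)
  have h2 : ((∑ m ∈ x.powerset, (-1 : ℤ) ^ m.card : ℤ) : ℂ)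
      = ∑ m ∈ x.powerset, (-1 : ℂ) ^ m.card := by push_cast; ring_nf
  rw [← h2, this]; split <;> simp

lemma core {n : ℕ} (X Z : Finset (Fin n)) (hXZ : X ⊆ Z) :
    ∑ S ∈ univ.filter (fun S => X ⊆ S ∧ S ⊆ Z), (-1:ℂ)^S.card
      = (-1:ℂ)^X.card * (if Z = X then 1 else 0) := by
  have hiff : (Z = X) = (Z \ X = ∅) := by
    rw [Finset.sdiff_eq_empty_iff_subset]
    exact propext ⟨fun h => h ▸ subset_rfl, fun h => Finset.Subset.antisymm h hXZ⟩
  simp only [hiff]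
  rw [← powC (Z \ X), Finset.mul_sum]
  refine Finset.sum_nbij' (fun S => S \ X) (fun U => U ∪ X) ?_ ?_ ?_ ?_ ?_
  · intro S hS
    simp only [mem_filter, mem_univ, true_and] at hS
    simpa [Finset.mem_powerset] using Finset.sdiff_subset_sdiff hS.2 (le_refl X)
  · intro U hU
    simp only [Finset.mem_powerset] at hU
    simp only [mem_filter, mem_univ, true_and]
    constructor
    · exact Finset.subset_union_right
    · exact Finset.union_subset (hU.trans (Finset.sdiff_subset)) hXZ
  · intro S hS
    simp only [mem_filter, mem_univ, true_and] at hS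
    exact Finset.sdiff_union_of_subset hS.1
  · intro U hU
    simp only [Finset.mem_powerset] at hU
    apply Finset.union_sdiff_cancel_right
    exact Finset.disjoint_left.2 fun a ha => (Finset.mem_sdiff.1 (hU ha)).2
  · intro S hS
    simp only [mem_filter, mem_univ, true_and] at hS
    rw [← pow_add, Finset.card_sdiff_of_subset hS.1, ← Nat.add_sub_assoc (Finset.card_le_card hS.1),
      Nat.add_sub_cancel_left]

lemma inner2 {n : ℕ} (g : Finset (Fin n) → ℂ) (Y Z : Finset (Fin n)) :
    ∑ S ∈ univ.filter (fun S => Y ⊆ S ∧ S ⊆ Z), (-1:ℂ)^(Z.card + S.card) * g Z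
      = if Z = Y then g Y else 0 := by
  by_cases hYZ : Y ⊆ Z
  · have hcore := core Y Z hYZ
    calc ∑ S ∈ univ.filter (fun S => Y ⊆ S ∧ S ⊆ Z), (-1:ℂ)^(Z.card + S.card) * g Z
        = ((-1:ℂ)^Z.card * g Z) * ∑ S ∈ univ.filter (fun S => Y ⊆ S ∧ S ⊆ Z), (-1:ℂ)^S.card := by
          rw [Finset.mul_sum]; exact Finset.sum_congr rfl fun S _ => by rw [pow_add]; ring
      _ = ((-1:ℂ)^Z.card * g Z) * ((-1:ℂ)^Y.card * (if Z = Y then 1 else 0)) := by rw [hcore]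
      _ = if Z = Y then g Y else 0 := by
          split
          · next h => subst h
                      have he : Even (Z.card + Z.card) := ⟨Z.card, rfl⟩
                      rw [mul_one]; rw [show ((-1:ℂ)^Z.card * g Z) * (-1:ℂ)^Z.card
                        = (-1:ℂ)^(Z.card + Z.card) * g Z by rw [pow_add]; ring, he.neg_one_pow, one_mul]
          · ring
  · have hempty : univ.filter (fun S => Y ⊆ S ∧ S ⊆ Z) = ∅ := by
      ext S; simp only [mem_filter, mem_univ, true_and, Finset.notMem_empty, iff_false, not_and]
      exact fun h1 h2 => absurd (h1.trans h2) hYZ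
    rw [hempty, Finset.sum_empty, if_neg (fun h => hYZ (by rw [h]))]

lemma inv2 {n : ℕ} (g : Finset (Fin n) → ℂ) (Y : Finset (Fin n)) :
    ∑ S ∈ univ.filter (fun S => Y ⊆ S), ∑ Z ∈ univ.filter (fun Z => S ⊆ Z),
      (-1:ℂ)^(Z.card + S.card) * g Z = g Y := by
  rw [Finset.sum_comm' (s' := fun Z => univ.filter (fun S => Y ⊆ S ∧ S ⊆ Z)) (t' := univ)
    (by intro S Z; simp only [mem_filter, mem_univ, true_and, and_true])]
  rw [Finset.sum_congr rfl (fun Z _ => inner2 g Y Z)]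
  simp

lemma inner1 {n : ℕ} (h : Finset (Fin n) → ℂ) (X S : Finset (Fin n)) :
    ∑ Y ∈ univ.filter (fun Y => X ⊆ Y ∧ Y ⊆ S), (-1:ℂ)^(Y.card + X.card) * h S
      = if S = X then h X else 0 := by
  by_cases hXS : X ⊆ S
  · have hcore := core X S hXS
    calc ∑ Y ∈ univ.filter (fun Y => X ⊆ Y ∧ Y ⊆ S), (-1:ℂ)^(Y.card + X.card) * h S
        = ((-1:ℂ)^X.card * h S) * ∑ Y ∈ univ.filter (fun Y => X ⊆ Y ∧ Y ⊆ S), (-1:ℂ)^Y.card := by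
          rw [Finset.mul_sum]; exact Finset.sum_congr rfl fun Y _ => by rw [pow_add]; ring
      _ = ((-1:ℂ)^X.card * h S) * ((-1:ℂ)^X.card * (if S = X then 1 else 0)) := by rw [hcore]
      _ = if S = X then h X else 0 := by
          split
          · next heq => subst heq
                        have he : Even (S.card + S.card) := ⟨S.card, rfl⟩
                        rw [mul_one, show ((-1:ℂ)^S.card * h S) * (-1:ℂ)^S.card
                          = (-1:ℂ)^(S.card + S.card) * h S by rw [pow_add]; ring, he.neg_one_pow, one_mul]
          · ring
  · have hempty : univ.filter (fun Y => X ⊆ Y ∧ Y ⊆ S) = ∅ := by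
      ext Y; simp only [mem_filter, mem_univ, true_and, Finset.notMem_empty, iff_false, not_and]
      exact fun h1 h2 => absurd (h1.trans h2) hXS
    rw [hempty, Finset.sum_empty, if_neg (fun heq => hXS (by rw [heq]))]

lemma inv1 {n : ℕ} (h : Finset (Fin n) → ℂ) (X : Finset (Fin n)) :
    ∑ Y ∈ univ.filter (fun Y => X ⊆ Y), (-1:ℂ)^(Y.card + X.card) *
      ∑ S ∈ univ.filter (fun S => Y ⊆ S), h S = h X := by
  have : ∀ Y ∈ univ.filter (fun Y => X ⊆ Y), (-1:ℂ)^(Y.card + X.card) *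
      ∑ S ∈ univ.filter (fun S => Y ⊆ S), h S
      = ∑ S ∈ univ.filter (fun S => Y ⊆ S), (-1:ℂ)^(Y.card + X.card) * h S :=
    fun Y _ => Finset.mul_sum _ _ _
  rw [Finset.sum_congr rfl this]
  rw [Finset.sum_comm' (s' := fun S => univ.filter (fun Y => X ⊆ Y ∧ Y ⊆ S)) (t' := univ)
    (by intro Y S; simp only [mem_filter, mem_univ, true_and, and_true])]
  rw [Finset.sum_congr rfl (fun S _ => inner1 h X S)]
  simp

/-- auxiliary matrix: identity on `T`-rows/cols, `K` elsewhere -/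
def nMat {n : ℕ} (K : Matrix (Fin n) (Fin n) ℂ) (T : Finset (Fin n)) :
    Matrix (Fin n) (Fin n) ℂ :=
  Matrix.of fun i j => if i ∈ T ∨ j ∈ T then (if i = j then 1 else 0) else K i j

lemma detN {n : ℕ} (K : Matrix (Fin n) (Fin n) ℂ) (T : Finset (Fin n)) :
    (nMat K T).det = (kSub K Tᶜ Tᶜ).det := by
  classical
  let e : {i : Fin n // i ∈ Tᶜ} ⊕ {i : Fin n // ¬ i ∈ Tᶜ} ≃ Fin n :=
    Equiv.sumCompl (fun i => i ∈ Tᶜ)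
  have hsub : (nMat K T).submatrix e e =
      Matrix.fromBlocks (kSub K Tᶜ Tᶜ) 0 0
        (1 : Matrix {i : Fin n // ¬ i ∈ Tᶜ} {i : Fin n // ¬ i ∈ Tᶜ} ℂ) := by
    ext i j
    rcases i with i | i <;> rcases j with j | j <;>
      simp only [Matrix.submatrix_apply, Equiv.sumCompl_apply_inl, Equiv.sumCompl_apply_inr,
        Matrix.fromBlocks_apply₁₁, Matrix.fromBlocks_apply₁₂, Matrix.fromBlocks_apply₂₁,
        Matrix.fromBlocks_apply₂₂, nMat, kSub, Matrix.of_apply, Matrix.zero_apply,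
        Matrix.one_apply, e]
    · have hi : ¬ (i : Fin n) ∈ T := Finset.mem_compl.1 i.2
      have hj : ¬ (j : Fin n) ∈ T := Finset.mem_compl.1 j.2
      simp [hi, hj]
    · have hi : ¬ (i : Fin n) ∈ T := Finset.mem_compl.1 i.2
      have hj : (j : Fin n) ∈ T := by simpa using j.2
      have : (i : Fin n) ≠ (j : Fin n) := fun h => hi (h ▸ hj)
      simp [hj, this]
    · have hi : (i : Fin n) ∈ T := by simpa using i.2
      have hj : ¬ (j : Fin n) ∈ T := Finset.mem_compl.1 j.2
      have : (i : Fin n) ≠ (j : Fin n) := fun h => hj (h ▸ hi)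
      simp [hi, this]
    · have hi : (i : Fin n) ∈ T := by simpa using i.2
      simp [hi, Subtype.ext_iff]
  have := Matrix.det_submatrix_equiv_self e (nMat K T)
  rw [← this, hsub, Matrix.det_fromBlocks_zero₂₁, Matrix.det_one, mul_one]

lemma prodN {n : ℕ} (K : Matrix (Fin n) (Fin n) ℂ) (T : Finset (Fin n))
    (σ : Equiv.Perm (Fin n)) :
    ∏ i, nMat K T (σ i) i
      = if (∀ i ∈ T, σ i = i) then ∏ i ∈ univ \ T, K (σ i) i else 0 := by
  by_cases hfix : ∀ i ∈ T, σ i = i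
  · rw [if_pos hfix, ← Finset.prod_sdiff (Finset.subset_univ T)]
    have h1 : ∏ i ∈ T, nMat K T (σ i) i = 1 := Finset.prod_eq_one fun i hi => by
      rw [hfix i hi]; simp [nMat, hi]
    have h2 : ∏ i ∈ univ \ T, nMat K T (σ i) i = ∏ i ∈ univ \ T, K (σ i) i :=
      Finset.prod_congr rfl fun i hi => by
        have hiT : i ∉ T := (Finset.mem_sdiff.1 hi).2
        have hσT : σ i ∉ T := fun hmem => by
          have h3 := σ.injective (hfix _ hmem)
          exact hiT (h3 ▸ hmem)
        simp [nMat, hiT, hσT]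
    rw [h2, h1, mul_one]
  · rw [if_neg hfix]
    push_neg at hfix; obtain ⟨i₀, hT, hσ⟩ := hfix
    exact Finset.prod_eq_zero (Finset.mem_univ i₀) (by simp [nMat, hT, hσ])

lemma prodInd {n : ℕ} (J T : Finset (Fin n)) (hTJ : T ⊆ J) (σ : Equiv.Perm (Fin n)) :
    ∏ i ∈ T, -(indMat J (σ i) i)
      = if (∀ i ∈ T, σ i = i) then (-1:ℂ)^T.card else 0 := by
  by_cases hfix : ∀ i ∈ T, σ i = i
  · rw [if_pos hfix]
    calc ∏ i ∈ T, -(indMat J (σ i) i) = ∏ _i ∈ T, (-1:ℂ) :=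
          Finset.prod_congr rfl fun i hi => by
            rw [hfix i hi, indMat, Matrix.diagonal_apply_eq]
            simp [hTJ hi]
      _ = (-1:ℂ)^T.card := by rw [Finset.prod_const]
  · rw [if_neg hfix]
    push_neg at hfix; obtain ⟨i₀, hT, hσ⟩ := hfix
    refine Finset.prod_eq_zero hT ?_
    rw [indMat, Matrix.diagonal_apply_ne _ hσ, neg_zero]

lemma detExpand {n : ℕ} (K : Matrix (Fin n) (Fin n) ℂ) (J : Finset (Fin n)) :
    (K - indMat J).det = ∑ T ∈ J.powerset, (-1:ℂ)^T.card * (kSub K Tᶜ Tᶜ).det := by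
  classical
  rw [Matrix.det_apply']
  have hexp : ∀ σ : Equiv.Perm (Fin n),
      ∏ i, (K - indMat J) (σ i) i
        = ∑ T ∈ (univ : Finset (Fin n)).powerset,
            (∏ i ∈ T, -(indMat J (σ i) i)) * ∏ i ∈ univ \ T, K (σ i) i := by
    intro σ
    rw [← Finset.prod_add (fun i => -(indMat J (σ i) i)) (fun i => K (σ i) i) univ]
    exact Finset.prod_congr rfl fun i _ => by
      simp [Matrix.sub_apply]; ring
  calc ∑ σ : Equiv.Perm (Fin n), (Equiv.Perm.sign σ : ℂ) * ∏ i, (K - indMat J) (σ i) i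
      = ∑ σ : Equiv.Perm (Fin n), ∑ T ∈ (univ : Finset (Fin n)).powerset,
          (Equiv.Perm.sign σ : ℂ) * ((∏ i ∈ T, -(indMat J (σ i) i)) * ∏ i ∈ univ \ T, K (σ i) i) := by
        exact Finset.sum_congr rfl fun σ _ => by rw [hexp σ, Finset.mul_sum]
    _ = ∑ T ∈ (univ : Finset (Fin n)).powerset, ∑ σ : Equiv.Perm (Fin n),
          (Equiv.Perm.sign σ : ℂ) * ((∏ i ∈ T, -(indMat J (σ i) i)) * ∏ i ∈ univ \ T, K (σ i) i) :=
        Finset.sum_comm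
    _ = ∑ T ∈ (univ : Finset (Fin n)).powerset,
          if T ⊆ J then (-1:ℂ)^T.card * (kSub K Tᶜ Tᶜ).det else 0 := by
        refine Finset.sum_congr rfl fun T _ => ?_
        by_cases hTJ : T ⊆ J
        · rw [if_pos hTJ, ← detN, Matrix.det_apply', Finset.mul_sum]
          refine Finset.sum_congr rfl fun σ _ => ?_
          rw [prodInd J T hTJ σ, prodN K T σ]
          split <;> ring
        · rw [if_neg hTJ]
          refine Finset.sum_eq_zero fun σ _ => ?_
          obtain ⟨i₀, hi₀T, hi₀J⟩ := Finset.not_subset.1 hTJ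
          have hz : ∏ i ∈ T, -(indMat J (σ i) i) = 0 := by
            refine Finset.prod_eq_zero hi₀T ?_
            rw [indMat]
            by_cases hs : σ i₀ = i₀
            · rw [hs, Matrix.diagonal_apply_eq]; simp [hi₀J]
            · rw [Matrix.diagonal_apply_ne _ hs, neg_zero]
          rw [hz, zero_mul, mul_zero]
    _ = ∑ T ∈ J.powerset, (-1:ℂ)^T.card * (kSub K Tᶜ Tᶜ).det := by
        rw [← Finset.sum_filter]
        congr 1
        ext T; simp [Finset.mem_powerset]

lemma signEq {a b : ℕ} (h : a % 2 = b % 2) : (-1:ℂ)^a = (-1:ℂ)^b := by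
  rw [neg_one_pow_eq_pow_mod_two, h, ← neg_one_pow_eq_pow_mod_two]

lemma fEq {n : ℕ} (K : Matrix (Fin n) (Fin n) ℂ) (J : Finset (Fin n)) :
    (-1:ℂ)^J.card * (K - indMat J).det
      = ∑ Y ∈ univ.filter (fun Y => Jᶜ ⊆ Y),
          (-1:ℂ)^(Y.card + Jᶜ.card) * (kSub K Y Y).det := by
  rw [detExpand, Finset.mul_sum]
  refine Finset.sum_nbij' (fun T => Tᶜ) (fun Y => Yᶜ) ?_ ?_ ?_ ?_ ?_
  · intro T hT
    simp only [mem_filter, mem_univ, true_and]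
    exact Finset.compl_subset_compl.2 (Finset.mem_powerset.1 hT)
  · intro Y hY
    simp only [mem_filter, mem_univ, true_and] at hY
    rw [Finset.mem_powerset, ← Finset.compl_subset_compl, compl_compl]
    exact hY
  · intro T _; exact compl_compl T
  · intro Y _; exact compl_compl Y
  · intro T hT
    beta_reduce
    rw [← mul_assoc, ← pow_add]
    congr 1
    have h1 := Finset.card_add_card_compl T
    have h2 := Finset.card_add_card_compl J
    rw [Fintype.card_fin] at h1 h2
    exact signEq (by omega)

end Stmt13Aux

open Stmt13Aux Finset in
theorem stmt_13 {n : ℕ} (K : Matrix (Fin n) (Fin n) ℂ) :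
    (∃ p : Finset (Fin n) → ℝ, IsDPP K p) ↔
      ∀ J : Finset (Fin n),
        ∃ r : ℝ, 0 ≤ r ∧ (-1 : ℂ) ^ J.card * (K - indMat J).det = r := by
  constructor
  · rintro ⟨p, hpos, _hsum, hmarg⟩ J
    refine ⟨p Jᶜ, hpos _, ?_⟩
    calc (-1:ℂ)^J.card * (K - indMat J).det
        = ∑ Y ∈ univ.filter (fun Y => Jᶜ ⊆ Y),
            (-1:ℂ)^(Y.card + Jᶜ.card) * (kSub K Y Y).det := fEq K J
      _ = ∑ Y ∈ univ.filter (fun Y => Jᶜ ⊆ Y), (-1:ℂ)^(Y.card + Jᶜ.card) *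
            ∑ S ∈ univ.filter (fun S => Y ⊆ S), ((p S : ℝ) : ℂ) := by
          refine Finset.sum_congr rfl fun Y _ => ?_
          rw [← hmarg Y]
          push_cast
          rfl
      _ = ((p Jᶜ : ℝ) : ℂ) := inv1 (fun S => ((p S : ℝ) : ℂ)) Jᶜ
  · intro h
    choose r hr0 hreq using h
    have hfS : ∀ S : Finset (Fin n), ((r Sᶜ : ℝ) : ℂ)
        = ∑ Z ∈ univ.filter (fun Z => S ⊆ Z),
            (-1:ℂ)^(Z.card + S.card) * (kSub K Z Z).det := by
      intro S
      rw [← hreq Sᶜ, fEq K Sᶜ]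
      simp only [compl_compl]
    have hmarg : ∀ Y : Finset (Fin n),
        ((∑ S ∈ Finset.univ.filter fun S => Y ⊆ S, r Sᶜ : ℝ) : ℂ) = (kSub K Y Y).det := by
      intro Y
      push_cast
      calc ∑ S ∈ univ.filter (fun S => Y ⊆ S), ((r Sᶜ : ℝ) : ℂ)
          = ∑ S ∈ univ.filter (fun S => Y ⊆ S), ∑ Z ∈ univ.filter (fun Z => S ⊆ Z),
              (-1:ℂ)^(Z.card + S.card) * (kSub K Z Z).det :=
            Finset.sum_congr rfl fun S _ => hfS S
        _ = (kSub K Y Y).det := inv2 _ Y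
    refine ⟨fun S => r Sᶜ, fun S => hr0 _, ?_, hmarg⟩
    · have h0 := hmarg ∅
      have hfil : (Finset.univ.filter fun S : Finset (Fin n) => ∅ ⊆ S) = univ :=
        Finset.filter_true_of_mem fun S _ => Finset.empty_subset S
      rw [hfil] at h0
      haveI : IsEmpty ((∅ : Finset (Fin n)) : Type) := by
        simp [Finset.isEmpty_coe_sort]
        exact ⟨fun x => x.2⟩
      rw [Matrix.det_isEmpty] at h0
      exact_mod_cast h0
end

section
/- Let K be an n×n complex matrix, p a determinantal point process with marginal kernel K, and a : Fin n an index with K a a ≠ 0. Let B = Fin n \ {a}, and define the Schur complement K' = K_B − (K a a)⁻¹ · K_{B,{a}} · K_{{a},B}, a matrix indexed by B. Then for every finset Y with a ∉ Y, the sum of p(S) over all finsets S with Y ∪ {a} ⊆ S equals K a a · det(K'_Y). In other words, the conditional law of 𝐘 \ {a} given a ∈ 𝐘 is a determinantal point process on the ground set Fin n \ {a} with marginal kernel K'. -/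
open Matrix

/-- Restriction of a matrix indexed by a finset `B` to a finset `Y ⊆ B`. -/
def kRestrict {n : ℕ} {B : Finset (Fin n)} (M : Matrix B B ℂ) (Y : Finset (Fin n))
    (h : Y ⊆ B) : Matrix Y Y ℂ :=
  Matrix.of fun i j => M ⟨i, h i.2⟩ ⟨j, h j.2⟩

theorem stmt_14 {n : ℕ} (K : Matrix (Fin n) (Fin n) ℂ) (p : Finset (Fin n) → ℝ)
    (hp : IsDPP K p) (a : Fin n) (ha : K a a ≠ 0) :
    ∀ Y : Finset (Fin n), (hY : a ∉ Y) →
      ((∑ S ∈ Finset.univ.filter fun S => insert a Y ⊆ S, p S : ℝ) : ℂ) =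
        K a a *
          (kRestrict
              (kSub K {a}ᶜ {a}ᶜ -
                (K a a)⁻¹ • (kSub K {a}ᶜ {a} * kSub K {a} {a}ᶜ))
              Y
              (by
                intro x hx
                simp only [Finset.mem_compl, Finset.mem_singleton]
                rintro rfl
                exact hY hx)).det := by
  intro Y hY
  rw [hp.2.2 (insert a Y)]
  set T := insert a Y with hT
  -- equivalence Unit ⊕ Y ≃ T
  let e : Unit ⊕ (Y : Finset (Fin n)) ≃ (T : Finset (Fin n)) :=
    { toFun := Sum.elim (fun _ => ⟨a, Finset.mem_insert_self a Y⟩)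
        (fun y => ⟨y, Finset.mem_insert_of_mem y.2⟩)
      invFun := fun x => if h : (x : Fin n) ∈ Y then Sum.inr ⟨x, h⟩ else Sum.inl ()
      left_inv := by
        rintro (⟨⟩ | ⟨y, hy⟩)
        · simp [hY]
        · simp [hy]
      right_inv := by
        rintro ⟨x, hx⟩
        rcases Finset.mem_insert.1 hx with rfl | h
        · simp [hY]
        · simp [h] }
  set A : Matrix Unit Unit ℂ := Matrix.of fun _ _ => K a a with hA
  set B : Matrix Unit (Y : Finset (Fin n)) ℂ := Matrix.of fun _ j => K a j with hB
  set C : Matrix (Y : Finset (Fin n)) Unit ℂ := Matrix.of fun i _ => K i a with hC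
  set D : Matrix (Y : Finset (Fin n)) (Y : Finset (Fin n)) ℂ :=
    Matrix.of fun i j => K i j with hD
  have hsub : (kSub K T T).submatrix e e = Matrix.fromBlocks A B C D := by
    ext i j
    rcases i with i | i <;> rcases j with j | j <;>
      simp [e, kSub, Matrix.fromBlocks, hA, hB, hC, hD]
  letI : Invertible A := {
    invOf := Matrix.of fun _ _ => (K a a)⁻¹
    invOf_mul_self := by
      ext i j
      simp [hA, Matrix.mul_apply, inv_mul_cancel₀ ha, Matrix.one_apply]
    mul_invOf_self := by
      ext i j
      simp [hA, Matrix.mul_apply, mul_inv_cancel₀ ha, Matrix.one_apply] }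
  have hinv : (⅟ A) = Matrix.of fun _ _ => (K a a)⁻¹ := rfl
  have hdet : (kSub K T T).det = A.det * (D - C * ⅟ A * B).det := by
    rw [← Matrix.det_submatrix_equiv_self e, hsub, Matrix.det_fromBlocks₁₁]
  rw [hdet]
  have hdA : A.det = K a a := by simp [hA]
  rw [hdA]
  congr 1
  congr 1
  ext i j
  simp only [kRestrict, kSub, hinv, Matrix.sub_apply, Matrix.smul_apply, Matrix.mul_apply,
    Matrix.of_apply, smul_eq_mul, hD, hC, hB]
  rw [Finset.sum_coe_sort ({a} : Finset (Fin n)) (fun k => K i k * K k j)]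
  simp [mul_comm, mul_assoc, mul_left_comm]
end

section
/- Let K be an n×n complex matrix that is Hermitian and idempotent (Kᴴ = K and K · K = K) with rank K = k, and let p be a determinantal point process with marginal kernel K. Then p is supported on finsets of cardinality exactly k: for every finset Y of Fin n with |Y| ≠ k, p(Y) = 0. -/
open Matrix

lemma kSub_det_singleton {n : ℕ} (K : Matrix (Fin n) (Fin n) ℂ) (i : Fin n) :
    (kSub K {i} {i}).det = K i i := by
  haveI : Subsingleton (({i} : Finset (Fin n)) : Type) := by
    rw [← Fintype.card_le_one_iff_subsingleton, Fintype.card_coe, Finset.card_singleton]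
  rw [Matrix.det_eq_elem_of_subsingleton _ ⟨i, Finset.mem_singleton_self i⟩]
  rfl

lemma kSub_det_pair {n : ℕ} (K : Matrix (Fin n) (Fin n) ℂ) (i j : Fin n) (h : i ≠ j) :
    (kSub K {i,j} {i,j}).det = K i i * K j j - K i j * K j i := by
  have hi : i ∈ ({i,j} : Finset (Fin n)) := by simp
  have hj : j ∈ ({i,j} : Finset (Fin n)) := by simp
  let e : Fin 2 → (({i,j} : Finset (Fin n)) : Type) := ![⟨i, hi⟩, ⟨j, hj⟩]
  have hbij : Function.Bijective e := by
    rw [Fintype.bijective_iff_injective_and_card]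
    constructor
    · intro a b hab
      fin_cases a <;> fin_cases b <;> simp_all [e]
    · rw [Fintype.card_fin, Fintype.card_coe,
        Finset.card_insert_of_notMem (by simpa using h), Finset.card_singleton]
  rw [← Matrix.det_submatrix_equiv_self (Equiv.ofBijective e hbij) (kSub K {i,j} {i,j}),
    Matrix.det_fin_two]
  simp [Matrix.submatrix_apply, e, kSub, Equiv.ofBijective]

lemma sum_ite_mem_card {n : ℕ} (S : Finset (Fin n)) (c : ℝ) :
    ∑ i : Fin n, (if i ∈ S then c else 0) = (S.card : ℝ) * c := by
  rw [Finset.sum_ite_mem, Finset.univ_inter, Finset.sum_const, nsmul_eq_mul]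

lemma momA {n : ℕ} (p : Finset (Fin n) → ℝ) :
    ∑ i : Fin n, ∑ S ∈ Finset.univ.filter fun S => ({i} : Finset (Fin n)) ⊆ S, p S
      = ∑ S : Finset (Fin n), p S * (S.card : ℝ) := by
  simp_rw [Finset.sum_filter, Finset.singleton_subset_iff]
  rw [Finset.sum_comm]
  exact Finset.sum_congr rfl fun S _ => by rw [sum_ite_mem_card]; ring

lemma momB {n : ℕ} (p : Finset (Fin n) → ℝ) :
    ∑ i : Fin n, ∑ j : Fin n,
        ∑ S ∈ Finset.univ.filter fun S => ({i, j} : Finset (Fin n)) ⊆ S, p S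
      = ∑ S : Finset (Fin n), p S * (S.card : ℝ)^2 := by
  simp_rw [Finset.sum_filter, Finset.insert_subset_iff, Finset.singleton_subset_iff]
  have h1 : ∀ i : Fin n, ∑ j : Fin n, ∑ S : Finset (Fin n),
      (if i ∈ S ∧ j ∈ S then p S else 0)
      = ∑ S : Finset (Fin n), (if i ∈ S then (S.card : ℝ) * p S else 0) := by
    intro i
    rw [Finset.sum_comm]
    refine Finset.sum_congr rfl fun S _ => ?_
    by_cases hiS : i ∈ S
    · simp only [hiS, true_and, if_true]
      exact sum_ite_mem_card S (p S)
    · simp [hiS]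
  simp_rw [h1]
  rw [Finset.sum_comm]
  refine Finset.sum_congr rfl fun S _ => ?_
  rw [sum_ite_mem_card]
  ring

lemma det_pair_sum {n : ℕ} (K : Matrix (Fin n) (Fin n) ℂ) :
    ∑ i : Fin n, ∑ j : Fin n, (kSub K {i,j} {i,j}).det
      = Matrix.trace K ^ 2 - Matrix.trace (K * K) + Matrix.trace K := by
  have detD : ∀ i j : Fin n, (kSub K {i,j} {i,j}).det
      = (K i i * K j j - K i j * K j i) + if j = i then K i i else 0 := by
    intro i j
    by_cases h : j = i
    · subst h
      have hpair : ({j, j} : Finset (Fin n)) = {j} := by simp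
      rw [hpair, kSub_det_singleton, if_pos rfl]
      ring
    · rw [kSub_det_pair K i j (Ne.symm h), if_neg h, add_zero]
  simp_rw [detD, Finset.sum_add_distrib, Finset.sum_sub_distrib]
  have hA : ∑ i : Fin n, ∑ j : Fin n, K i i * K j j = Matrix.trace K ^ 2 := by
    rw [← Finset.sum_mul_sum]
    simp [Matrix.trace, Matrix.diag, sq]
  have hB : ∑ i : Fin n, ∑ j : Fin n, K i j * K j i = Matrix.trace (K * K) := by
    simp [Matrix.trace, Matrix.mul_apply, Matrix.diag]
  have hC : ∑ i : Fin n, ∑ j : Fin n, (if j = i then K i i else 0) = Matrix.trace K := by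
    simp [Matrix.trace, Matrix.diag]
  rw [hA, hB, hC]

set_option maxHeartbeats 1000000 in
theorem stmt_16 {n : ℕ} (K : Matrix (Fin n) (Fin n) ℂ) (hH : K.IsHermitian)
    (hidem : K * K = K) (k : ℕ) (hrank : K.rank = k) (p : Finset (Fin n) → ℝ)
    (hp : IsDPP K p) :
    ∀ Y : Finset (Fin n), Y.card ≠ k → p Y = 0 := by
  obtain ⟨hpos, hsum1, hdpp⟩ := hp
  -- trace K = k
  have htr : Matrix.trace K = (k : ℂ) := by
    have hidem' : K.mulVecLin ∘ₗ K.mulVecLin = K.mulVecLin := by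
      rw [← Matrix.mulVecLin_mul, hidem]
    have hproj : LinearMap.IsProj (LinearMap.range K.mulVecLin) K.mulVecLin :=
      ⟨fun x => LinearMap.mem_range_self _ x, fun x hx => by
        obtain ⟨y, rfl⟩ := hx
        rw [← LinearMap.comp_apply, hidem']⟩
    have h1 : LinearMap.trace ℂ (Fin n → ℂ) K.mulVecLin = (K.rank : ℂ) := by
      rw [hproj.trace]; rfl
    have h2 : LinearMap.trace ℂ (Fin n → ℂ) K.mulVecLin = Matrix.trace K := by
      rw [LinearMap.trace_eq_matrix_trace ℂ (Pi.basisFun ℂ (Fin n)),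
        LinearMap.toMatrix_eq_toMatrix', ← Matrix.toLin'_apply' K,
        LinearMap.toMatrix'_toLin']
    rw [← h2, h1, hrank]
  have htr2 : Matrix.trace (K * K) = (k : ℂ) := by rw [hidem, htr]
  -- first moment
  have hE1 : ∑ S : Finset (Fin n), p S * (S.card : ℝ) = (k : ℝ) := by
    have key : ((∑ S : Finset (Fin n), p S * (S.card : ℝ) : ℝ) : ℂ) = ((k : ℝ) : ℂ) := by
      rw [← momA p, Complex.ofReal_sum]
      calc ∑ i : Fin n, ((∑ S ∈ Finset.univ.filter fun S => ({i} : Finset (Fin n)) ⊆ S,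
            p S : ℝ) : ℂ)
          = ∑ i : Fin n, (kSub K {i} {i}).det :=
            Finset.sum_congr rfl fun i _ => hdpp {i}
        _ = ∑ i : Fin n, K i i := Finset.sum_congr rfl fun i _ => kSub_det_singleton K i
        _ = Matrix.trace K := rfl
        _ = (k : ℂ) := htr
    exact_mod_cast key
  -- second moment
  have hE2 : ∑ S : Finset (Fin n), p S * (S.card : ℝ)^2 = (k : ℝ)^2 := by
    have key : ((∑ S : Finset (Fin n), p S * (S.card : ℝ)^2 : ℝ) : ℂ) = (((k : ℝ))^2 : ℝ) := by
      rw [← momB p, Complex.ofReal_sum]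
      calc ∑ i : Fin n,
            ((∑ j : Fin n, ∑ S ∈ Finset.univ.filter fun S => ({i, j} : Finset (Fin n)) ⊆ S,
              p S : ℝ) : ℂ)
          = ∑ i : Fin n, ∑ j : Fin n, (kSub K {i,j} {i,j}).det :=
            Finset.sum_congr rfl fun i _ => by
              rw [Complex.ofReal_sum]
              exact Finset.sum_congr rfl fun j _ => hdpp {i, j}
        _ = Matrix.trace K ^ 2 - Matrix.trace (K * K) + Matrix.trace K := det_pair_sum K
        _ = (((k : ℝ))^2 : ℝ) := by rw [htr, htr2]; push_cast; ring
    exact_mod_cast key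
  -- variance is zero
  have hzero : ∑ S : Finset (Fin n), p S * ((S.card : ℝ) - (k : ℝ))^2 = 0 := by
    have expand : ∀ S : Finset (Fin n), p S * ((S.card : ℝ) - (k : ℝ))^2
        = p S * (S.card : ℝ)^2 - 2 * (k : ℝ) * (p S * (S.card : ℝ)) + (k : ℝ)^2 * p S :=
      fun S => by ring
    simp_rw [expand]
    rw [Finset.sum_add_distrib, Finset.sum_sub_distrib, ← Finset.mul_sum, ← Finset.mul_sum,
      hE2, hE1, hsum1]
    ring
  intro Y hY
  have hterm : p Y * ((Y.card : ℝ) - (k : ℝ))^2 = 0 :=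
    (Finset.sum_eq_zero_iff_of_nonneg fun S _ =>
      mul_nonneg (hpos S) (sq_nonneg _)).mp hzero Y (Finset.mem_univ Y)
  rcases mul_eq_zero.mp hterm with h | h
  · exact h
  · exfalso
    apply hY
    have : (Y.card : ℝ) = (k : ℝ) := by
      have := pow_eq_zero_iff (n := 2) (by norm_num) |>.mp h
      linarith
    exact_mod_cast this
end

section
/- Let K be an n×n complex matrix that is Hermitian and idempotent (Kᴴ = K and K · K = K) with rank K = k, and let p be a determinantal point process with marginal kernel K. Then for every finset Y of Fin n with |Y| = k, the individual probability p(Y) (regarded as a complex number) equals det(K_Y); in particular det(K_Y) is a nonnegative real number. -/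
open Matrix

/-- If the principal submatrix `K_S` has nonzero determinant, `S.card ≤ K.rank`. -/
lemma card_le_rank_of_det_ne_zero {n : ℕ} (K : Matrix (Fin n) (Fin n) ℂ)
    (S : Finset (Fin n)) (h : (kSub K S S).det ≠ 0) : S.card ≤ K.rank := by
  have hunit : IsUnit (kSub K S S) :=
    (Matrix.isUnit_iff_isUnit_det _).2 (isUnit_iff_ne_zero.2 h)
  have hrows : LinearIndependent ℂ (fun i : S => (kSub K S S) i) :=
    Matrix.linearIndependent_rows_iff_isUnit.2 hunit
  have hrows' : LinearIndependent ℂ (fun i : S => K (i : Fin n)) := by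
    have : (fun i : S => (kSub K S S) i) =
        (fun i : S => (LinearMap.funLeft ℂ ℂ (Subtype.val : S → Fin n)) (K (i : Fin n))) := rfl
    exact LinearIndependent.of_comp _ (this ▸ hrows)
  have hspan : S.card =
      Module.finrank ℂ (Submodule.span ℂ (Set.range (fun i : S => K (i : Fin n)))) := by
    rw [finrank_span_eq_card hrows', Fintype.card_coe]
  rw [K.rank_eq_finrank_span_row, hspan]
  apply Submodule.finrank_mono
  apply Submodule.span_mono
  rintro _ ⟨i, rfl⟩
  exact ⟨(i : Fin n), rfl⟩

theorem stmt_17 {n : ℕ} (K : Matrix (Fin n) (Fin n) ℂ) (hH : K.IsHermitian)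
    (hidem : K * K = K) (k : ℕ) (hrank : K.rank = k) (p : Finset (Fin n) → ℝ)
    (hp : IsDPP K p) :
    ∀ Y : Finset (Fin n), Y.card = k →
      ((p Y : ℝ) : ℂ) = (kSub K Y Y).det ∧
        ∃ r : ℝ, 0 ≤ r ∧ (kSub K Y Y).det = r := by
  obtain ⟨hpos, hsum, hdpp⟩ := hp
  -- det vanishes on sets larger than k
  have hdet0 : ∀ S : Finset (Fin n), k < S.card → (kSub K S S).det = 0 := by
    intro S hS
    by_contra h
    have := card_le_rank_of_det_ne_zero K S h
    omega
  -- p vanishes on sets larger than k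
  have hp0 : ∀ S : Finset (Fin n), k < S.card → p S = 0 := by
    intro S hS
    have h1 := hdpp S
    rw [hdet0 S hS, Complex.ofReal_eq_zero] at h1
    have := (Finset.sum_eq_zero_iff_of_nonneg (fun T _ => hpos T)).1 h1 S
      (Finset.mem_filter.2 ⟨Finset.mem_univ S, subset_refl S⟩)
    exact this
  intro Y hY
  have hsum' : (∑ S ∈ Finset.univ.filter fun S => Y ⊆ S, p S) = p Y := by
    apply Finset.sum_eq_single_of_mem
    · exact Finset.mem_filter.2 ⟨Finset.mem_univ Y, subset_refl Y⟩
    · intro S hS hne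
      have hYS : Y ⊆ S := (Finset.mem_filter.1 hS).2
      have : Y.card < S.card := Finset.card_lt_card (lt_of_le_of_ne hYS (Ne.symm hne))
      exact hp0 S (hY ▸ this)
  have hmain : ((p Y : ℝ) : ℂ) = (kSub K Y Y).det := by
    rw [← hdpp Y, hsum']
  exact ⟨hmain, p Y, hpos Y, hmain.symm⟩
end
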